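/- arXiv:2604.20284 — 6 statements merged into one kernel-verified Lean document; each statement's English description precedes it below -/
import Mathlib

section
/- Let H_1, …, H_R be Hermitian d×d complex matrices, let H := Σ_{r=1}^R H_r, and for τ ≥ 0 let U₁(τ) := exp(−i H_R τ) · exp(−i H_{R−1} τ) ⋯ exp(−i H_1 τ). Then ‖U₁(τ) − exp(−i H τ)‖ ≤ (τ²/2) · Σ_{r₁=1}^{R} ‖[ Σ_{r₂=r₁+1}^{R} H_{r₂}, H_{r₁} ]‖, where [A,B] := AB − BA. -/
open Matrix
open scoped Matrix.Norms.L2Operator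
open NormedSpace


variable {d : ℕ}

local notation "M" => Matrix (Fin d) (Fin d) ℂ

noncomputable instance : NormedAlgebra ℚ M := NormedAlgebra.restrictScalars ℚ ℂ M

lemma exp_skew_mem_unitary {S : M} (hS : S ∈ skewAdjoint (M)) :
    exp S ∈ unitary (M) := exp_mem_unitary_of_mem_skewAdjoint hS

lemma real_smul_skew {B : M} (hB : B ∈ skewAdjoint (M)) (s : ℝ) :
    (s : ℂ) • B ∈ skewAdjoint (M) := by
  rw [skewAdjoint.mem_iff] at hB ⊢
  rw [star_smul, hB]
  simp [Complex.star_def, Complex.conj_ofReal]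

lemma exp_deriv_real (X : M) (u : ℝ) :
    HasDerivAt (fun s : ℝ => exp ((s : ℂ) • X)) (X * exp ((u : ℂ) • X)) u :=
  by simpa [Function.comp_def] using
    (hasDerivAt_exp_smul_const' (𝕂 := ℂ) X (u : ℂ)).scomp u Complex.ofRealCLM.hasDerivAt

lemma exp_deriv_real' (X : M) (u : ℝ) :
    HasDerivAt (fun s : ℝ => exp ((s : ℂ) • X)) (exp ((u : ℂ) • X) * X) u :=
  by simpa [Function.comp_def] using
    (hasDerivAt_exp_smul_const (𝕂 := ℂ) X (u : ℂ)).scomp u Complex.ofRealCLM.hasDerivAt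

lemma exp_neg_mul_exp (X : M) : exp (-X) * exp X = 1 := by
  rw [← NormedSpace.exp_add_of_commute (Commute.refl X).neg_left, neg_add_cancel, exp_zero]

lemma comm_growth {A B : M} (hA : A ∈ skewAdjoint (M)) (hB : B ∈ skewAdjoint (M))
    {s : ℝ} (hs : 0 ≤ s) :
    ‖exp ((s : ℂ) • B) * A - A * exp ((s : ℂ) • B)‖ ≤ s * ‖B * A - A * B‖ := by
  set h : ℝ → M := fun u => exp ((u : ℂ) • B) * A * exp ((u : ℂ) • (-B)) - A with hh
  have hderiv : ∀ u ∈ Set.Icc (0:ℝ) s, HasDerivWithinAt h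
      (exp ((u : ℂ) • B) * (B * A - A * B) * exp ((u : ℂ) • (-B))) (Set.Icc 0 s) u := by
    intro u _
    have d1 := ((exp_deriv_real B u).mul_const A).mul (exp_deriv_real' (-B) u)
    have comm : exp ((u:ℂ) • B) * B = B * exp ((u:ℂ) • B) :=
      (((Commute.refl B).smul_left (u:ℂ)).exp_left).eq
    have : B * exp ((u:ℂ) • B) * A * exp ((u:ℂ) • -B) +
        exp ((u:ℂ) • B) * A * (exp ((u:ℂ) • -B) * -B)
        = exp ((u : ℂ) • B) * (B * A - A * B) * exp ((u : ℂ) • (-B)) := by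
      have comm2 : exp ((u:ℂ) • (-B)) * (-B) = (-B) * exp ((u:ℂ) • (-B)) :=
        (((Commute.refl (-B)).smul_left (u:ℂ)).exp_left).eq
      rw [comm2, ← comm]
      noncomm_ring
    rw [← this]
    exact ((d1.sub_const A).hasDerivWithinAt)
  have hbound : ∀ u ∈ Set.Icc (0:ℝ) s,
      ‖exp ((u : ℂ) • B) * (B * A - A * B) * exp ((u : ℂ) • (-B))‖ ≤ ‖B * A - A * B‖ := by
    intro u _
    rw [CStarRing.norm_mul_mem_unitary _ (exp_skew_mem_unitary (real_smul_skew (neg_mem hB) u)),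
        CStarRing.norm_mem_unitary_mul _ (exp_skew_mem_unitary (real_smul_skew hB u))]
  have := norm_image_sub_le_of_norm_deriv_le_segment' hderiv
    (fun u hu => hbound u (Set.Ico_subset_Icc_self hu)) s (Set.right_mem_Icc.2 hs)
  have h0 : h 0 = 0 := by simp [hh]
  rw [h0, sub_zero] at this
  -- now relate goal to ‖h s‖
  have key : exp ((s : ℂ) • B) * A - A * exp ((s : ℂ) • B)
      = h s * exp ((s : ℂ) • B) := by
    have hinv : exp ((s:ℂ) • (-B)) * exp ((s:ℂ) • B) = 1 := by
      rw [smul_neg, exp_neg_mul_exp]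
    rw [hh]
    simp only [sub_mul, mul_assoc, hinv, mul_one]
  rw [key, CStarRing.norm_mul_mem_unitary _ (exp_skew_mem_unitary (real_smul_skew hB s))]
  rw [sub_zero] at this
  linarith [this]

lemma exp_cont (X : M) : Continuous (fun s : ℝ => exp ((s : ℂ) • X)) :=
  exp_continuous.comp (Complex.continuous_ofReal.smul continuous_const)

lemma key_lemma {A B : M} (hA : A ∈ skewAdjoint (M)) (hB : B ∈ skewAdjoint (M)) :
    ‖exp B * exp A - exp (A + B)‖ ≤ ‖B * A - A * B‖ / 2 := by
  set S : M := A + B with hS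
  have hSskew : S ∈ skewAdjoint (M) := add_mem hA hB
  set f : ℝ → M := fun s =>
    exp (((1 - s : ℝ) : ℂ) • S) * (exp ((s : ℂ) • B) * exp ((s : ℂ) • A)) with hf
  set f' : ℝ → M := fun s =>
    exp (((1 - s : ℝ) : ℂ) • S) *
      ((exp ((s : ℂ) • B) * A - A * exp ((s : ℂ) • B)) * exp ((s : ℂ) • A)) with hf'
  have hP : ∀ u : ℝ, HasDerivAt (fun s : ℝ => exp (((1 - s : ℝ) : ℂ) • S))
      (-(S * exp (((1 - u : ℝ) : ℂ) • S))) u := by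
    intro u
    have h1 : HasDerivAt (fun s : ℝ => (1 - s : ℝ)) (-1) u := by
      simpa using (hasDerivAt_id u).const_sub 1
    have h2 := exp_deriv_real (d := d) S (1 - u)
    have h3 := h2.scomp u h1
    simp only [Function.comp_def, neg_smul, one_smul] at h3
    exact h3
  have hderiv : ∀ u : ℝ, HasDerivAt f (f' u) u := by
    intro u
    have dQ := (exp_deriv_real (d := d) B u).mul (exp_deriv_real (d := d) A u)
    have := (hP u).mul dQ
    refine this.congr_deriv ?_
    symm
    simp only [Pi.mul_apply]
    rw [hf']
    have commS : S * exp (((1 - u : ℝ) : ℂ) • S) = exp (((1 - u : ℝ) : ℂ) • S) * S :=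
      (((Commute.refl S).smul_left _).exp_left).symm.eq
    have commB : B * exp ((u:ℂ) • B) = exp ((u:ℂ) • B) * B :=
      (((Commute.refl B).smul_left _).exp_left).symm.eq
    have commB' : ∀ X : M, B * (exp ((u:ℂ) • B) * X) = exp ((u:ℂ) • B) * (B * X) := by
      intro X; rw [← mul_assoc, commB, mul_assoc]
    rw [commS, hS]
    noncomm_ring
  have hcont' : Continuous f' := by
    rw [hf']
    have c1 : Continuous (fun s : ℝ => exp (((1 - s : ℝ) : ℂ) • S)) :=
      exp_continuous.comp ((Complex.continuous_ofReal.comp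
        (continuous_const.sub continuous_id)).smul continuous_const)
    exact c1.mul ((((exp_cont B).mul continuous_const).sub
      (continuous_const.mul (exp_cont B))).mul (exp_cont A))
  have hint : IntervalIntegrable f' MeasureTheory.volume 0 1 :=
    hcont'.intervalIntegrable 0 1
  have hftc : ∫ u in (0:ℝ)..1, f' u = f 1 - f 0 :=
    intervalIntegral.integral_eq_sub_of_hasDerivAt (fun u _ => hderiv u) hint
  have hf1 : f 1 = exp B * exp A := by
    simp [hf]
  have hf0 : f 0 = exp S := by
    simp [hf]
  have hbound : ∀ u ∈ Set.Icc (0:ℝ) 1, ‖f' u‖ ≤ u * ‖B * A - A * B‖ := by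
    intro u hu
    rw [hf']
    rw [CStarRing.norm_mem_unitary_mul _
        (exp_skew_mem_unitary (real_smul_skew hSskew (1 - u))),
      CStarRing.norm_mul_mem_unitary _ (exp_skew_mem_unitary (real_smul_skew hA u))]
    exact comm_growth hA hB hu.1
  calc ‖exp B * exp A - exp (A + B)‖ = ‖∫ u in (0:ℝ)..1, f' u‖ := by
        rw [hftc, hf1, hf0, hS]
    _ ≤ ∫ u in (0:ℝ)..1, ‖f' u‖ :=
        intervalIntegral.norm_integral_le_integral_norm zero_le_one
    _ ≤ ∫ u in (0:ℝ)..1, u * ‖B * A - A * B‖ := by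
        apply intervalIntegral.integral_mono_on zero_le_one (hcont'.norm.intervalIntegrable 0 1)
        · exact (continuous_id.mul continuous_const).intervalIntegrable 0 1
        · exact hbound
    _ = ‖B * A - A * B‖ / 2 := by
        rw [intervalIntegral.integral_mul_const, integral_id]
        ring

lemma herm_smul_skew {X : M} (hX : X.IsHermitian) (τ : ℝ) :
    (-(Complex.I * (τ : ℂ))) • X ∈ skewAdjoint (M) := by
  rw [skewAdjoint.mem_iff, star_smul, Matrix.star_eq_conjTranspose, hX.eq]
  simp only [star_neg, star_mul', Complex.star_def, Complex.conj_ofReal, Complex.conj_I]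
  rw [neg_smul, neg_smul]
  congr 1
  rw [← neg_smul]
  congr 1
  ring

lemma key_scaled {X Y : M} (hX : X.IsHermitian) (hY : Y.IsHermitian) (τ : ℝ) :
    ‖exp ((-(Complex.I * (τ : ℂ))) • Y) * exp ((-(Complex.I * (τ : ℂ))) • X)
        - exp ((-(Complex.I * (τ : ℂ))) • (X + Y))‖ ≤ τ ^ 2 / 2 * ‖Y * X - X * Y‖ := by
  set c : ℂ := -(Complex.I * (τ : ℂ)) with hc
  have h := key_lemma (herm_smul_skew hX τ) (herm_smul_skew hY τ)
  rw [← smul_add] at h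
  refine h.trans_eq ?_
  have : (c • Y) * (c • X) - (c • X) * (c • Y) = (c * c) • (Y * X - X * Y) := by
    rw [smul_mul_smul_comm, smul_mul_smul_comm, smul_sub]
  rw [this, norm_smul]
  have hcc : c * c = -((τ : ℂ) ^ 2) := by
    rw [hc]; ring_nf; rw [Complex.I_sq]; ring
  rw [hcc]
  simp only [norm_neg, norm_pow, Complex.norm_real, Real.norm_eq_abs]
  rw [sq_abs]
  ring

lemma filter_lt_eq_image {R : ℕ} (t : Fin (R + 1)) :
    Finset.univ.filter (fun r : Fin (R + 1) => t < r)
      = (Finset.univ.filter (fun k : Fin R => t < k.succ)).image Fin.succ := by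
  ext r
  simp only [Finset.mem_filter, Finset.mem_image, Finset.mem_univ, true_and]
  constructor
  · intro hr
    have hr0 : r ≠ 0 := by
      intro h; rw [h] at hr; exact absurd hr (by simp [Fin.not_lt, Fin.zero_le])
    obtain ⟨k, rfl⟩ := Fin.exists_succ_eq.2 hr0
    exact ⟨k, hr, rfl⟩
  · rintro ⟨k, hk, rfl⟩
    exact hk

lemma sum_filter_lt {R : ℕ} (g : Fin (R + 1) → M) (t : Fin (R + 1)) :
    ∑ r ∈ Finset.univ.filter (fun r : Fin (R + 1) => t < r), g r
      = ∑ k ∈ Finset.univ.filter (fun k : Fin R => t < k.succ), g k.succ := by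
  rw [filter_lt_eq_image t, Finset.sum_image (fun a _ b _ h => Fin.succ_injective _ h)]

lemma sum_filter_zero_lt {R : ℕ} (g : Fin (R + 1) → M) :
    ∑ r ∈ Finset.univ.filter (fun r : Fin (R + 1) => 0 < r), g r = ∑ k : Fin R, g k.succ := by
  rw [sum_filter_lt g 0]
  congr 1
  simp [Finset.filter_true_of_mem, Fin.succ_pos]

lemma sum_filter_succ_lt {R : ℕ} (g : Fin (R + 1) → M) (j : Fin R) :
    ∑ r ∈ Finset.univ.filter (fun r : Fin (R + 1) => j.succ < r), g r
      = ∑ k ∈ Finset.univ.filter (fun k : Fin R => j < k), g k.succ := by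
  rw [sum_filter_lt g j.succ]
  congr 1
  ext k
  simp [Fin.succ_lt_succ_iff]

lemma prod_reverse_succ {R : ℕ} (E : Fin (R + 1) → M) :
    (((List.finRange (R + 1)).reverse.map E).prod)
      = (((List.finRange R).reverse.map (fun j => E j.succ)).prod) * E 0 := by
  rw [List.finRange_succ]
  simp [List.reverse_cons, List.map_append, List.prod_append, List.map_reverse, List.map_map,
    Function.comp_def]

set_option maxHeartbeats 1000000 in
lemma trotter_main (τ : ℝ) : ∀ (R : ℕ) (H : Fin R → M), (∀ r, (H r).IsHermitian) →
    ‖(((List.finRange R).reverse.map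
          (fun r => exp ((-(Complex.I * (τ : ℂ))) • H r))).prod
        - exp ((-(Complex.I * (τ : ℂ))) • ∑ r, H r))‖ ≤
      τ ^ 2 / 2 * ∑ r₁ : Fin R,
        ‖(∑ r₂ ∈ Finset.univ.filter (fun r₂ => r₁ < r₂), H r₂) * H r₁
            - H r₁ * (∑ r₂ ∈ Finset.univ.filter (fun r₂ => r₁ < r₂), H r₂)‖ := by
  intro R
  induction R with
  | zero =>
    intro H hH
    simp
  | succ R ih =>
    intro H hH
    set c : ℂ := -(Complex.I * (τ : ℂ)) with hc
    set A : M := H 0 with hA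
    set B : M := ∑ j : Fin R, H j.succ with hB
    have hBh : B.IsHermitian := by
      show Bᴴ = B
      rw [hB, Matrix.conjTranspose_sum]
      exact Finset.sum_congr rfl fun j _ => (hH j.succ).eq
    have hsum : ∑ r, H r = A + B := by rw [hB, hA, Fin.sum_univ_succ]
    have hE0 : exp (c • A) ∈ unitary (M) :=
      exp_skew_mem_unitary (herm_smul_skew (hH 0) τ)
    have hIH := ih (fun j => H j.succ) (fun j => hH j.succ)
    have hkey := key_scaled (hH 0) hBh τ
    rw [prod_reverse_succ, hsum]
    set P : M := ((List.finRange R).reverse.map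
        (fun j => exp (c • H j.succ))).prod with hP
    have tri : ‖P * exp (c • A) - exp (c • (A + B))‖ ≤
        ‖P - exp (c • B)‖ + ‖exp (c • B) * exp (c • A) - exp (c • (A + B))‖ := by
      calc ‖P * exp (c • A) - exp (c • (A + B))‖
          ≤ ‖P * exp (c • A) - exp (c • B) * exp (c • A)‖
            + ‖exp (c • B) * exp (c • A) - exp (c • (A + B))‖ := by
            exact norm_sub_le_norm_sub_add_norm_sub _ _ _
        _ = ‖P - exp (c • B)‖ + ‖exp (c • B) * exp (c • A) - exp (c • (A + B))‖ := by
            rw [← sub_mul, CStarRing.norm_mul_mem_unitary _ hE0]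
    refine tri.trans ?_
    have hRHS : ∑ r₁ : Fin (R + 1),
        ‖(∑ r₂ ∈ Finset.univ.filter (fun r₂ => r₁ < r₂), H r₂) * H r₁
            - H r₁ * (∑ r₂ ∈ Finset.univ.filter (fun r₂ => r₁ < r₂), H r₂)‖
        = ‖B * A - A * B‖ + ∑ j : Fin R,
            ‖(∑ k ∈ Finset.univ.filter (fun k => j < k), H k.succ) * H j.succ
              - H j.succ * (∑ k ∈ Finset.univ.filter (fun k => j < k), H k.succ)‖ := by
      rw [Fin.sum_univ_succ]
      refine congrArg₂ (· + ·) ?_ ?_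
      · rw [sum_filter_zero_lt, ← hB, ← hA]
      · exact Finset.sum_congr rfl fun j _ => by rw [sum_filter_succ_lt]
    rw [hRHS]
    beta_reduce at hIH
    rw [← hB] at hIH
    calc ‖P - exp (c • B)‖ + ‖exp (c • B) * exp (c • A) - exp (c • (A + B))‖
        ≤ (τ ^ 2 / 2 * ∑ j : Fin R,
            ‖(∑ k ∈ Finset.univ.filter (fun k => j < k), H k.succ) * H j.succ
              - H j.succ * (∑ k ∈ Finset.univ.filter (fun k => j < k), H k.succ)‖)
          + τ ^ 2 / 2 * ‖B * A - A * B‖ := add_le_add hIH hkey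
      _ = τ ^ 2 / 2 * (‖B * A - A * B‖ + ∑ j : Fin R,
            ‖(∑ k ∈ Finset.univ.filter (fun k => j < k), H k.succ) * H j.succ
              - H j.succ * (∑ k ∈ Finset.univ.filter (fun k => j < k), H k.succ)‖) := by ring


/-- **Commutator-scaling bound for the first-order Trotter formula.**
Let `H 1, …, H R` be Hermitian `d × d` complex matrices, `Hsum := ∑ r, H r`, and
`U₁(τ) := exp(−i H_R τ) ⋯ exp(−i H_1 τ)` (the factor with the largest index leftmost).
Then `‖U₁(τ) − exp(−i Hsum τ)‖ ≤ (τ²/2) ∑_{r₁} ‖[∑_{r₂ > r₁} H r₂, H r₁]‖`,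
where `‖·‖` is the spectral norm. -/
theorem first_order_trotter_commutator_scaling {d R : ℕ}
    (H : Fin R → Matrix (Fin d) (Fin d) ℂ) (hHerm : ∀ r, (H r).IsHermitian)
    (τ : ℝ) (hτ : 0 ≤ τ) :
    ‖(((List.finRange R).reverse.map
          (fun r => NormedSpace.exp ((-(Complex.I * (τ : ℂ))) • H r))).prod
        - NormedSpace.exp ((-(Complex.I * (τ : ℂ))) • ∑ r, H r))‖ ≤
      τ ^ 2 / 2 * ∑ r₁ : Fin R,
        ‖(∑ r₂ ∈ Finset.univ.filter (fun r₂ => r₁ < r₂), H r₂) * H r₁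
            - H r₁ * (∑ r₂ ∈ Finset.univ.filter (fun r₂ => r₁ < r₂), H r₂)‖ := by
  exact trotter_main τ R H hHerm
end

section
/- Let H_1, …, H_R be Hermitian d×d complex matrices, let H := Σ_{r=1}^R H_r, and for τ ≥ 0 let U₁(τ) := exp(−i H_R τ) · exp(−i H_{R−1} τ) ⋯ exp(−i H_1 τ). Then ‖U₁(τ) − exp(−i H τ)‖ ≤ (τ²/2) · ( Σ_{r=1}^{R} ‖H_r‖ )². -/
open Matrix
open scoped Matrix.Norms.L2Operator

namespace TrotterProofAux

variable {d : ℕ}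

local notation "𝕄" => Matrix (Fin d) (Fin d) ℂ

/-- The unitary evolution `exp(-i t A)`. -/
noncomputable def eU (A : 𝕄) (t : ℝ) : 𝕄 :=
  NormedSpace.exp ((-(Complex.I * (t : ℂ))) • A)

lemma eU_def (A : 𝕄) (t : ℝ) :
    eU A t = NormedSpace.exp ((-(Complex.I * (t : ℂ))) • A) := rfl

lemma smul_eq_real_smul (A : 𝕄) (t : ℝ) :
    (-(Complex.I * (t : ℂ))) • A = t • ((-Complex.I) • A) := by
  rw [← smul_assoc]
  congr 1
  simp [Complex.real_smul]
  ring

lemma exp_neg_mul_exp (X : 𝕄) :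
    NormedSpace.exp (-X) * NormedSpace.exp X = 1 := by
  rw [← Matrix.exp_add_of_commute _ _ ((Commute.refl X).neg_left), neg_add_cancel,
    NormedSpace.exp_zero]

lemma smul_mem_skewAdjoint {A : 𝕄} (hA : A.IsHermitian) (t : ℝ) :
    (-(Complex.I * (t : ℂ))) • A ∈ skewAdjoint 𝕄 := by
  rw [skewAdjoint.mem_iff, star_smul, Matrix.star_eq_conjTranspose, hA.eq, ← neg_smul]
  congr 1
  simp [Complex.star_def]

lemma eU_mem_unitary {A : 𝕄} (hA : A.IsHermitian) (t : ℝ) :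
    eU A t ∈ unitary 𝕄 := by
  have h := smul_mem_skewAdjoint hA t
  rw [eU_def, Unitary.mem_iff, Matrix.star_eq_conjTranspose, ← Matrix.exp_conjTranspose,
    ← Matrix.star_eq_conjTranspose, skewAdjoint.mem_iff.mp h]
  exact ⟨exp_neg_mul_exp _, by
    rw [← Matrix.exp_add_of_commute _ _ ((Commute.refl ((-(Complex.I * (t : ℂ))) • A)).neg_right), add_neg_cancel,
      NormedSpace.exp_zero]⟩

lemma norm_eU_mul {A : 𝕄} (hA : A.IsHermitian) (t : ℝ) (X : 𝕄) :
    ‖eU A t * X‖ = ‖X‖ :=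
  CStarRing.norm_mem_unitary_mul X (eU_mem_unitary hA t)

lemma norm_mul_eU {A : 𝕄} (hA : A.IsHermitian) (t : ℝ) (X : 𝕄) :
    ‖X * eU A t‖ = ‖X‖ :=
  CStarRing.norm_mul_mem_unitary X (eU_mem_unitary hA t)

lemma hasDerivAt_eU (A : 𝕄) (t : ℝ) :
    HasDerivAt (eU A) (eU A t * ((-Complex.I) • A)) t := by
  have h := hasDerivAt_exp_smul_const (𝕂 := ℝ) (𝔸 := 𝕄) ((-Complex.I) • A) t
  have hfun : eU A = fun u : ℝ => NormedSpace.exp (u • ((-Complex.I) • A)) :=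
    funext fun u => by rw [eU_def, smul_eq_real_smul]
  simp only [hfun]
  exact h

lemma eU_zero (A : 𝕄) : eU A 0 = 1 := by
  rw [eU_def]
  norm_num

lemma eU_zero_matrix (t : ℝ) : eU (0 : 𝕄) t = 1 := by
  rw [eU_def, smul_zero, NormedSpace.exp_zero]

lemma norm_neg_I_smul (A : 𝕄) : ‖(-Complex.I) • A‖ = ‖A‖ := by
  rw [norm_smul]
  simp

lemma norm_eU_sub_one_le {A : 𝕄} (hA : A.IsHermitian) {t : ℝ} (ht : 0 ≤ t) :
    ‖eU A t - 1‖ ≤ t * ‖A‖ := by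
  have cont : ContinuousOn (eU A) (Set.Icc 0 t) := fun x _ =>
    (hasDerivAt_eU A x).continuousAt.continuousWithinAt
  have deriv : ∀ x ∈ Set.Ico 0 t,
      HasDerivWithinAt (eU A) (eU A x * ((-Complex.I) • A)) (Set.Ici x) x := fun x _ =>
    (hasDerivAt_eU A x).hasDerivWithinAt
  have bound : ∀ x ∈ Set.Ico 0 t, ‖eU A x * ((-Complex.I) • A)‖ ≤ ‖A‖ := by
    intro x _
    rw [norm_eU_mul hA, norm_neg_I_smul]
  have key := norm_image_sub_le_of_norm_deriv_right_le_segment cont deriv bound t ⟨ht, le_rfl⟩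
  rw [eU_zero] at key
  calc ‖eU A t - 1‖ ≤ ‖A‖ * (t - 0) := key
    _ = t * ‖A‖ := by ring

lemma two_term {A B : 𝕄} (hA : A.IsHermitian) (hB : B.IsHermitian) {τ : ℝ} (hτ : 0 ≤ τ) :
    ‖eU A τ * eU B τ - eU (A + B) τ‖ ≤ τ ^ 2 * ‖A‖ * ‖B‖ := by
  set xA : 𝕄 := (-Complex.I) • A with hxA
  set xB : 𝕄 := (-Complex.I) • B with hxB
  set F : ℝ → 𝕄 := fun t => eU A t * eU B t * eU (-(A + B)) t with hF
  have hxC : (-Complex.I) • (-(A + B)) = -xA - xB := by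
    rw [hxA, hxB, smul_neg, smul_add]; abel
  have hABherm : (A + B).IsHermitian := hA.add hB
  have hnegherm : (-(A + B)).IsHermitian := hABherm.neg
  -- derivative of F
  have hF' : ∀ t : ℝ, HasDerivAt F
      (eU A t * (xA * (eU B t - 1) - (eU B t - 1) * xA) * eU (-(A + B)) t) t := by
    intro t
    have h1 := hasDerivAt_eU A t
    have h2 := hasDerivAt_eU B t
    have h3 := hasDerivAt_eU (-(A + B)) t
    rw [← hxA] at h1
    rw [← hxB] at h2
    rw [hxC] at h3
    have h123 := (h1.mul h2).mul h3
    have hcomm : eU (-(A + B)) t * (-xA - xB) = (-xA - xB) * eU (-(A + B)) t := by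
      have hc : Commute ((-(Complex.I * (t : ℂ))) • (-(A + B))) (-xA - xB) := by
        rw [← hxC]
        exact ((Commute.refl (-(A + B))).smul_left _).smul_right _
      exact (hc.exp_left).eq
    refine h123.congr_deriv ?_
    rw [hcomm, Pi.mul_apply]
    noncomm_ring
  have hFcont : ContinuousOn (fun t => F t - 1) (Set.Icc 0 τ) := fun x _ =>
    ((hF' x).sub_const 1).continuousAt.continuousWithinAt
  have hFderiv : ∀ x ∈ Set.Ico 0 τ, HasDerivWithinAt (fun t => F t - 1)
      (eU A x * (xA * (eU B x - 1) - (eU B x - 1) * xA) * eU (-(A + B)) x) (Set.Ici x) x :=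
    fun x _ => ((hF' x).sub_const 1).hasDerivWithinAt
  have hBnd : ∀ x ∈ Set.Ico 0 τ,
      ‖eU A x * (xA * (eU B x - 1) - (eU B x - 1) * xA) * eU (-(A + B)) x‖ ≤
        ‖A‖ * ‖B‖ * (2 * x) := by
    intro x hx
    rw [norm_mul_eU hnegherm, norm_eU_mul hA]
    have h1 : ‖xA * (eU B x - 1)‖ ≤ ‖A‖ * (x * ‖B‖) := by
      calc ‖xA * (eU B x - 1)‖ ≤ ‖xA‖ * ‖eU B x - 1‖ := norm_mul_le _ _
        _ ≤ ‖A‖ * (x * ‖B‖) := by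
            rw [hxA, norm_neg_I_smul]
            exact mul_le_mul_of_nonneg_left (norm_eU_sub_one_le hB hx.1) (norm_nonneg _)
    have h2 : ‖(eU B x - 1) * xA‖ ≤ ‖A‖ * (x * ‖B‖) := by
      calc ‖(eU B x - 1) * xA‖ ≤ ‖eU B x - 1‖ * ‖xA‖ := norm_mul_le _ _
        _ ≤ ‖A‖ * (x * ‖B‖) := by
            rw [hxA, norm_neg_I_smul, mul_comm]
            exact mul_le_mul_of_nonneg_left (norm_eU_sub_one_le hB hx.1) (norm_nonneg _)
    calc ‖xA * (eU B x - 1) - (eU B x - 1) * xA‖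
        ≤ ‖xA * (eU B x - 1)‖ + ‖(eU B x - 1) * xA‖ := norm_sub_le _ _
      _ ≤ ‖A‖ * (x * ‖B‖) + ‖A‖ * (x * ‖B‖) := add_le_add h1 h2
      _ = ‖A‖ * ‖B‖ * (2 * x) := by ring
  have hBd : ∀ x : ℝ, HasDerivAt (fun t : ℝ => ‖A‖ * ‖B‖ * t ^ 2) (‖A‖ * ‖B‖ * (2 * x)) x := by
    intro x
    have := (hasDerivAt_pow 2 x).const_mul (‖A‖ * ‖B‖)
    simpa using this
  have hF0 : ‖F 0 - 1‖ ≤ ‖A‖ * ‖B‖ * (0 : ℝ) ^ 2 := by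
    simp [hF, eU_zero]
  have key : ‖F τ - 1‖ ≤ ‖A‖ * ‖B‖ * τ ^ 2 :=
    image_norm_le_of_norm_deriv_right_le_deriv_boundary hFcont hFderiv hF0 hBd hBnd ⟨hτ, le_rfl⟩
  have hrel : eU A τ * eU B τ - eU (A + B) τ = (F τ - 1) * eU (A + B) τ := by
    rw [sub_mul, one_mul, hF]
    have hinv : eU (-(A + B)) τ * eU (A + B) τ = 1 := by
      rw [eU_def, eU_def, smul_neg, exp_neg_mul_exp]
    rw [mul_assoc, hinv, mul_one]
  rw [hrel, norm_mul_eU hABherm]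
  calc ‖F τ - 1‖ ≤ ‖A‖ * ‖B‖ * τ ^ 2 := key
    _ = τ ^ 2 * ‖A‖ * ‖B‖ := by ring

lemma isHermitian_list_sum : ∀ (l : List 𝕄), (∀ A ∈ l, A.IsHermitian) → l.sum.IsHermitian := by
  intro l
  induction l with
  | nil => intro _; simp
  | cons A t ih =>
    intro h
    rw [List.sum_cons]
    exact (h A (List.mem_cons_self)).add (ih fun B hB => h B (List.mem_cons_of_mem _ hB))

lemma norm_list_sum_le : ∀ (l : List 𝕄), ‖l.sum‖ ≤ (l.map norm).sum := by
  intro l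
  induction l with
  | nil => simp
  | cons A t ih =>
    rw [List.sum_cons, List.map_cons, List.sum_cons]
    exact (norm_add_le _ _).trans (by gcongr)

lemma list_map_norm_sum_nonneg (l : List 𝕄) : 0 ≤ (l.map norm).sum :=
  List.sum_nonneg (by simp only [List.mem_map]; rintro x ⟨a, -, rfl⟩; exact norm_nonneg _)

lemma key_list (τ : ℝ) (hτ : 0 ≤ τ) :
    ∀ (l : List 𝕄), (∀ A ∈ l, A.IsHermitian) →
    ‖(l.reverse.map (fun A => eU A τ)).prod - eU l.sum τ‖ ≤
      τ ^ 2 / 2 * ((l.map norm).sum) ^ 2 := by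
  intro l
  induction l with
  | nil =>
    intro _
    simp [eU_zero_matrix]
  | cons A t ih =>
    intro h
    have hA : A.IsHermitian := h A (List.mem_cons_self)
    have ht : ∀ B ∈ t, B.IsHermitian := fun B hB => h B (List.mem_cons_of_mem _ hB)
    have hS : t.sum.IsHermitian := isHermitian_list_sum t ht
    have hprod : ((A :: t).reverse.map (fun A => eU A τ)).prod =
        (t.reverse.map (fun A => eU A τ)).prod * eU A τ := by
      rw [List.reverse_cons, List.map_append, List.prod_append]
      simp
    have hsum : (A :: t).sum = t.sum + A := by rw [List.sum_cons, add_comm]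
    rw [hprod, hsum]
    have step1 : ‖(t.reverse.map (fun A => eU A τ)).prod * eU A τ - eU (t.sum + A) τ‖ ≤
        ‖(t.reverse.map (fun A => eU A τ)).prod - eU t.sum τ‖ +
        ‖eU t.sum τ * eU A τ - eU (t.sum + A) τ‖ := by
      have hsplit : (t.reverse.map (fun A => eU A τ)).prod * eU A τ - eU (t.sum + A) τ =
          ((t.reverse.map (fun A => eU A τ)).prod - eU t.sum τ) * eU A τ +
          (eU t.sum τ * eU A τ - eU (t.sum + A) τ) := by
        rw [sub_mul]; abel
      rw [hsplit]
      refine (norm_add_le _ _).trans ?_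
      rw [norm_mul_eU hA]
    refine step1.trans ?_
    have h2 := two_term hS hA hτ
    have h1 := ih ht
    have hnorm : ‖t.sum‖ ≤ (t.map norm).sum := norm_list_sum_le t
    have hnn : (0:ℝ) ≤ (t.map norm).sum := list_map_norm_sum_nonneg t
    have hAnn : (0:ℝ) ≤ ‖A‖ := norm_nonneg _
    rw [List.map_cons, List.sum_cons]
    have hτ2 : (0:ℝ) ≤ τ ^ 2 := sq_nonneg τ
    nlinarith [h1, h2, mul_le_mul_of_nonneg_left hnorm hAnn, norm_nonneg t.sum,
      sq_nonneg ‖A‖, mul_nonneg hτ2 (mul_nonneg hAnn hnn)]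

end TrotterProofAux

/-- **Norm-scaling bound for the first-order Trotter formula.**
Let `H 1, …, H R` be Hermitian `d × d` complex matrices, `Hsum := ∑ r, H r`, and
`U₁(τ) := exp(−i H_R τ) ⋯ exp(−i H_1 τ)` (the factor with the largest index leftmost).
Then `‖U₁(τ) − exp(−i Hsum τ)‖ ≤ (τ²/2) (∑ r, ‖H r‖)²`,
where `‖·‖` is the spectral norm. -/
theorem first_order_trotter_norm_scaling {d R : ℕ}
    (H : Fin R → Matrix (Fin d) (Fin d) ℂ) (hHerm : ∀ r, (H r).IsHermitian)
    (τ : ℝ) (hτ : 0 ≤ τ) :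
    ‖(((List.finRange R).reverse.map
          (fun r => NormedSpace.exp ((-(Complex.I * (τ : ℂ))) • H r))).prod
        - NormedSpace.exp ((-(Complex.I * (τ : ℂ))) • ∑ r, H r))‖ ≤
      τ ^ 2 / 2 * (∑ r : Fin R, ‖H r‖) ^ 2 := by
  have key := TrotterProofAux.key_list τ hτ ((List.finRange R).map H)
    (by simp only [List.mem_map]; rintro A ⟨r, -, rfl⟩; exact hHerm r)
  have h1 : (((List.finRange R).map H).reverse.map (fun A => TrotterProofAux.eU A τ)).prod =
      ((List.finRange R).reverse.map
        (fun r => NormedSpace.exp ((-(Complex.I * (τ : ℂ))) • H r))).prod := by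
    rw [← List.map_reverse, List.map_map]
    rfl
  have h2 : ((List.finRange R).map H).sum = ∑ r, H r := by
    rw [Fin.sum_univ_def]
  have h3 : (((List.finRange R).map H).map norm).sum = ∑ r : Fin R, ‖H r‖ := by
    rw [List.map_map, Fin.sum_univ_def]
    rfl
  rw [h1, h2, h3] at key
  exact key
end

section
/- Let H be a Hermitian d×d complex matrix, let C > 0, p > 1, T > 0, ε > 0, and let m be a positive integer with m ≥ (C T^p / ε)^{1/(p−1)}. Let U be a d×d complex matrix with ‖U‖ ≤ 1 such that ‖exp(−i H (T/m)) − U‖ ≤ C (T/m)^p. Then ‖exp(−i H T) − U^m‖ ≤ ε. -/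
open Matrix
open scoped Matrix.Norms.L2Operator

/-- Telescoping bound: `‖V^n - U^n‖ ≤ n * ‖V - U‖` when `‖V‖, ‖U‖ ≤ 1`. -/
lemma telescope_pow_sub_pow {R : Type*} [NormedRing R] (V U : R)
    (h1 : ‖(1 : R)‖ ≤ 1) (hV : ‖V‖ ≤ 1) (hU : ‖U‖ ≤ 1) :
    ∀ n : ℕ, ‖V ^ n - U ^ n‖ ≤ n * ‖V - U‖ := by
  intro n
  induction n with
  | zero => simp
  | succ n ih =>
    have key : V ^ (n + 1) - U ^ (n + 1) = V ^ n * (V - U) + (V ^ n - U ^ n) * U := by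
      rw [pow_succ, pow_succ]; noncomm_ring
    have hVn : ‖V ^ n‖ ≤ 1 := by
      rcases Nat.eq_zero_or_pos n with hn | hn
      · simpa [hn] using h1
      · calc ‖V ^ n‖ ≤ ‖V‖ ^ n := norm_pow_le' V hn
          _ ≤ 1 ^ n := pow_le_pow_left₀ (norm_nonneg V) hV n
          _ = 1 := one_pow n
    calc ‖V ^ (n + 1) - U ^ (n + 1)‖
        ≤ ‖V ^ n * (V - U)‖ + ‖(V ^ n - U ^ n) * U‖ := by rw [key]; exact norm_add_le _ _
      _ ≤ ‖V ^ n‖ * ‖V - U‖ + ‖V ^ n - U ^ n‖ * ‖U‖ := by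
          gcongr <;> [exact norm_mul_le _ _; exact norm_mul_le _ _]
      _ ≤ 1 * ‖V - U‖ + (n * ‖V - U‖) * 1 := by
          gcongr <;> first | exact hVn | exact ih | exact hU | positivity
      _ = (n + 1 : ℕ) * ‖V - U‖ := by push_cast; ring

/-- **Error-to-step-count conversion.**
If `H` is Hermitian, `C > 0`, `p > 1`, `T > 0`, `ε > 0`, `m` is a positive integer with
`m ≥ (C T^p / ε)^(1/(p−1))`, and `U` is a matrix with `‖U‖ ≤ 1` satisfying
`‖exp(−i H (T/m)) − U‖ ≤ C (T/m)^p`, then `‖exp(−i H T) − U^m‖ ≤ ε`. -/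
theorem trotter_error_to_global_error {d : ℕ}
    (H : Matrix (Fin d) (Fin d) ℂ) (hHerm : H.IsHermitian)
    (C p T ε : ℝ) (hC : 0 < C) (hp : 1 < p) (hT : 0 < T) (hε : 0 < ε)
    (m : ℕ) (hm : 0 < m)
    (hm' : (C * T ^ p / ε) ^ (1 / (p - 1)) ≤ (m : ℝ))
    (U : Matrix (Fin d) (Fin d) ℂ) (hU : ‖U‖ ≤ 1)
    (hstep : ‖NormedSpace.exp ((-(Complex.I * ((T / (m : ℝ) : ℝ) : ℂ))) • H) - U‖ ≤
      C * (T / (m : ℝ)) ^ p) :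
    ‖NormedSpace.exp ((-(Complex.I * (T : ℂ))) • H) - U ^ m‖ ≤ ε := by
  have hmR : (0 : ℝ) < (m : ℝ) := by exact_mod_cast hm
  set V := NormedSpace.exp ((-(Complex.I * ((T / (m : ℝ) : ℝ) : ℂ))) • H) with hVdef
  have h1 : ‖(1 : Matrix (Fin d) (Fin d) ℂ)‖ ≤ 1 := by
    rcases Nat.eq_zero_or_pos d with hd | hd
    · subst hd
      have : (1 : Matrix (Fin 0) (Fin 0) ℂ) = 0 := Subsingleton.elim _ _
      simp [this]
    · haveI : Nonempty (Fin d) := ⟨⟨0, hd⟩⟩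
      exact le_of_eq (CStarRing.norm_of_mem_unitary (one_mem _))
  -- V is unitary hence has norm ≤ 1
  have hskew : (-(Complex.I * ((T / (m : ℝ) : ℝ) : ℂ))) • H ∈
      skewAdjoint (Matrix (Fin d) (Fin d) ℂ) := by
    rw [skewAdjoint.mem_iff, star_smul, Matrix.star_eq_conjTranspose, hHerm.eq, ← neg_smul]
    congr 1
    simp [Complex.ext_iff]
  letI : NormedAlgebra ℚ (Matrix (Fin d) (Fin d) ℂ) := NormedAlgebra.restrictScalars ℚ ℂ _
  have hVunit : V ∈ unitary (Matrix (Fin d) (Fin d) ℂ) :=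
    NormedSpace.exp_mem_unitary_of_mem_skewAdjoint hskew
  have hVnorm : ‖V‖ ≤ 1 := by
    rcases Nat.eq_zero_or_pos d with hd | hd
    · subst hd
      have : V = 0 := Subsingleton.elim _ _
      simp [this]
    · haveI : Nonempty (Fin d) := ⟨⟨0, hd⟩⟩
      exact le_of_eq (CStarRing.norm_of_mem_unitary hVunit)
  -- exp(-iTH) = V^m
  have hm0 : ((m : ℕ) : ℂ) ≠ 0 := by exact_mod_cast hm.ne'
  have hexp : NormedSpace.exp ((-(Complex.I * (T : ℂ))) • H) = V ^ m := by
    rw [hVdef, ← NormedSpace.exp_nsmul]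
    congr 1
    rw [← Nat.cast_smul_eq_nsmul ℂ, smul_smul]
    congr 1
    push_cast
    field_simp
  -- telescoping
  have htel : ‖V ^ m - U ^ m‖ ≤ m * ‖V - U‖ := telescope_pow_sub_pow V U h1 hVnorm hU m
  -- arithmetic
  have hp1 : 0 < p - 1 := by linarith
  have hrpos : 0 < C * T ^ p / ε := by positivity
  have hmp : C * T ^ p / ε ≤ (m : ℝ) ^ (p - 1) := by
    have : ((C * T ^ p / ε) ^ (1 / (p - 1))) ^ (p - 1) = C * T ^ p / ε := by
      rw [← Real.rpow_mul hrpos.le, one_div, inv_mul_cancel₀ hp1.ne', Real.rpow_one]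
    calc C * T ^ p / ε = ((C * T ^ p / ε) ^ (1 / (p - 1))) ^ (p - 1) := this.symm
      _ ≤ (m : ℝ) ^ (p - 1) :=
          Real.rpow_le_rpow (Real.rpow_nonneg hrpos.le _) hm' hp1.le
  have hmpow : (0 : ℝ) < (m : ℝ) ^ (p - 1) := Real.rpow_pos_of_pos hmR _
  have hmppos : (0 : ℝ) < (m : ℝ) ^ p := Real.rpow_pos_of_pos hmR _
  have harith : (m : ℝ) * (C * (T / (m : ℝ)) ^ p) ≤ ε := by
    have heq : (m : ℝ) * (C * (T / (m : ℝ)) ^ p) = C * T ^ p / (m : ℝ) ^ (p - 1) := by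
      rw [Real.div_rpow hT.le hmR.le, Real.rpow_sub hmR, Real.rpow_one]
      field_simp
    rw [heq, div_le_iff₀ hmpow]
    have h1' : C * T ^ p ≤ (m : ℝ) ^ (p - 1) * ε := (div_le_iff₀ hε).mp hmp
    linarith [h1']
  calc ‖NormedSpace.exp ((-(Complex.I * (T : ℂ))) • H) - U ^ m‖
      = ‖V ^ m - U ^ m‖ := by rw [hexp]
    _ ≤ m * ‖V - U‖ := htel
    _ ≤ m * (C * (T / (m : ℝ)) ^ p) := by gcongr
    _ ≤ ε := harith
end

section
/- Let G be an m×n complex matrix and let F be the (m+n)×(m+n) block matrix F = [[0, G], [Gᴴ, 0]]. Then: (i) ‖F‖₁ = ‖G‖₁ + ‖Gᴴ‖₁, and (ii) ‖F²‖₁ = 2‖Gᴴ G‖₁ = 2·Tr(Gᴴ G). -/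
open Matrix
open scoped Matrix.Norms.L2Operator ComplexOrder

/-- The positive semidefinite square root of a positive semidefinite matrix
(removed from Mathlib; restored with its old definition). -/
noncomputable def Matrix.PosSemidef.sqrt {n 𝕜 : Type*} [Fintype n] [DecidableEq n] [RCLike 𝕜]
    {A : Matrix n n 𝕜} (hA : A.PosSemidef) : Matrix n n 𝕜 :=
  hA.1.eigenvectorUnitary.1 * diagonal ((↑) ∘ (√·) ∘ hA.1.eigenvalues) *
  (star hA.1.eigenvectorUnitary : Matrix n n 𝕜)

section SqrtPort
open scoped MatrixOrder

lemma Matrix.PosSemidef.sqrt_eq_cfc {n 𝕜 : Type*} [Fintype n] [DecidableEq n] [RCLike 𝕜]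
    {A : Matrix n n 𝕜} (hA : A.PosSemidef) : hA.sqrt = CFC.sqrt A := by
  rw [CFC.sqrt_eq_cfc, cfc_nnreal_eq_real _ A, hA.1.cfc_eq]
  simp only [IsHermitian.cfc, Matrix.PosSemidef.sqrt, Unitary.conjStarAlgAut_apply]
  congr 3
  funext i
  simp [Real.coe_sqrt]
  rw [max_eq_left (hA.eigenvalues_nonneg i)]

lemma Matrix.PosSemidef.posSemidef_sqrt {n 𝕜 : Type*} [Fintype n] [DecidableEq n] [RCLike 𝕜]
    {A : Matrix n n 𝕜} (hA : A.PosSemidef) : hA.sqrt.PosSemidef := by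
  rw [hA.sqrt_eq_cfc]
  exact (CFC.sqrt_nonneg A).posSemidef

lemma Matrix.PosSemidef.sqrt_mul_self {n 𝕜 : Type*} [Fintype n] [DecidableEq n] [RCLike 𝕜]
    {A : Matrix n n 𝕜} (hA : A.PosSemidef) : hA.sqrt * hA.sqrt = A := by
  rw [hA.sqrt_eq_cfc]
  exact CFC.sqrt_mul_sqrt_self A hA.nonneg

lemma Matrix.PosSemidef.eq_sqrt_of_sq_eq {n 𝕜 : Type*} [Fintype n] [DecidableEq n] [RCLike 𝕜]
    {B A : Matrix n n 𝕜} (hB : B.PosSemidef) (hA : A.PosSemidef) (h : B ^ 2 = A) :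
    B = hA.sqrt := by
  rw [hA.sqrt_eq_cfc]
  exact (CFC.sqrt_unique (by rw [← h, pow_two]) hB.nonneg).symm

end SqrtPort

/-- The trace norm `‖M‖₁ := Tr √(Mᴴ M)` of a complex matrix, where `√` is the positive
semidefinite square root of the positive semidefinite matrix `Mᴴ M`. -/
noncomputable def traceNorm {m n : Type*} [Fintype m] [Fintype n] [DecidableEq n]
    (M : Matrix m n ℂ) : ℝ :=
  ((Matrix.posSemidef_conjTranspose_mul_self M).sqrt).trace.re

lemma traceNorm_eq_of_sq {m n : Type*} [Fintype m] [Fintype n] [DecidableEq n]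
    (M : Matrix m n ℂ) (B : Matrix n n ℂ) (hB : B.PosSemidef) (h : B * B = Mᴴ * M) :
    traceNorm M = B.trace.re := by
  have := hB.eq_sqrt_of_sq_eq (Matrix.posSemidef_conjTranspose_mul_self M)
    (by rw [pow_two, h])
  rw [traceNorm, ← this]

lemma posSemidef_fromBlocks_diag {p q : Type*} [Fintype p] [Fintype q] [DecidableEq p]
    [DecidableEq q] {A : Matrix p p ℂ} {D : Matrix q q ℂ}
    (hA : A.PosSemidef) (hD : D.PosSemidef) :
    (Matrix.fromBlocks A 0 0 D).PosSemidef := by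
  have h : Matrix.fromBlocks A 0 0 D =
      (Matrix.fromBlocks hA.sqrt 0 0 hD.sqrt)ᴴ * Matrix.fromBlocks hA.sqrt 0 0 hD.sqrt := by
    rw [Matrix.fromBlocks_conjTranspose, Matrix.fromBlocks_multiply]
    simp [hA.posSemidef_sqrt.1.eq, hD.posSemidef_sqrt.1.eq, hA.sqrt_mul_self, hD.sqrt_mul_self]
  rw [h]
  exact Matrix.posSemidef_conjTranspose_mul_self _

lemma trace_fromBlocks' {p q : Type*} [Fintype p] [Fintype q]
    (A : Matrix p p ℂ) (B : Matrix p q ℂ) (C : Matrix q p ℂ) (D : Matrix q q ℂ) :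
    (Matrix.fromBlocks A B C D).trace = A.trace + D.trace := by
  simp [Matrix.trace, Matrix.diag, Fintype.sum_sum_type, Matrix.fromBlocks]

/-- For an `m × n` complex matrix `G` and the block matrix `F = [[0, G], [Gᴴ, 0]]`:
(i) `‖F‖₁ = ‖G‖₁ + ‖Gᴴ‖₁`, and (ii) `‖F²‖₁ = 2 ‖Gᴴ G‖₁ = 2 Tr(Gᴴ G)`. -/
theorem traceNorm_fromBlocks_offDiagonal {m n : ℕ} (G : Matrix (Fin m) (Fin n) ℂ) :
    traceNorm (Matrix.fromBlocks 0 G Gᴴ 0) = traceNorm G + traceNorm Gᴴ ∧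
    traceNorm (Matrix.fromBlocks 0 G Gᴴ 0 * Matrix.fromBlocks 0 G Gᴴ 0) =
      2 * traceNorm (Gᴴ * G) ∧
    traceNorm (Matrix.fromBlocks 0 G Gᴴ 0 * Matrix.fromBlocks 0 G Gᴴ 0) =
      2 * ((Gᴴ * G).trace).re := by
  set F := Matrix.fromBlocks 0 G Gᴴ 0 with hF
  have hGGH : Matrix.PosSemidef (G * Gᴴ) := Matrix.posSemidef_self_mul_conjTranspose G
  have hGHG : Matrix.PosSemidef (Gᴴ * G) := Matrix.posSemidef_conjTranspose_mul_self G
  have hFH : Fᴴ = F := by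
    rw [hF, Matrix.fromBlocks_conjTranspose]
    simp
  have hFF : F * F = Matrix.fromBlocks (G * Gᴴ) 0 0 (Gᴴ * G) := by
    rw [hF, Matrix.fromBlocks_multiply]
    simp
  -- (i)
  have h1 : traceNorm F = traceNorm G + traceNorm Gᴴ := by
    have := traceNorm_eq_of_sq F (Matrix.fromBlocks hGGH.sqrt 0 0 hGHG.sqrt)
      (posSemidef_fromBlocks_diag hGGH.posSemidef_sqrt hGHG.posSemidef_sqrt)
      (by
        rw [hFH, hFF, Matrix.fromBlocks_multiply]
        simp [hGGH.sqrt_mul_self, hGHG.sqrt_mul_self])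
    rw [this, trace_fromBlocks', Complex.add_re]
    have hG : traceNorm G = hGHG.sqrt.trace.re :=
      traceNorm_eq_of_sq G hGHG.sqrt hGHG.posSemidef_sqrt (by rw [hGHG.sqrt_mul_self])
    have hGH : traceNorm Gᴴ = hGGH.sqrt.trace.re :=
      traceNorm_eq_of_sq Gᴴ hGGH.sqrt hGGH.posSemidef_sqrt
        (by rw [hGGH.sqrt_mul_self, Matrix.conjTranspose_conjTranspose])
    rw [hG, hGH]; ring
  -- (ii)
  have hP : Matrix.PosSemidef (Matrix.fromBlocks (G * Gᴴ) 0 0 (Gᴴ * G)) :=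
    posSemidef_fromBlocks_diag hGGH hGHG
  have h3 : traceNorm (F * F) = 2 * ((Gᴴ * G).trace).re := by
    have := traceNorm_eq_of_sq (F * F) (Matrix.fromBlocks (G * Gᴴ) 0 0 (Gᴴ * G)) hP
      (by
        rw [Matrix.conjTranspose_mul, hFH, ← hFF, Matrix.mul_assoc])
    rw [this, trace_fromBlocks', Complex.add_re, Matrix.trace_mul_comm G Gᴴ]
    ring
  have h2 : traceNorm (F * F) = 2 * traceNorm (Gᴴ * G) := by
    have hGHG2 : traceNorm (Gᴴ * G) = ((Gᴴ * G).trace).re :=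
      traceNorm_eq_of_sq (Gᴴ * G) (Gᴴ * G) hGHG (by rw [hGHG.1.eq])
    rw [h3, hGHG2]
  exact ⟨h1, h2, h3⟩
end

section
/- With the elastic-wave Hamiltonian H := Σ_{α=1}^{3} (i · B_cell^(−1/2) A^(α) B_cell^(−1/2)) ⊗ D^(α) defined in the context, one has ‖H‖ ≤ (3/h) · ρ^(−1/2) · ‖S_comp^(−1/2)‖. -/
open Matrix
open scoped Matrix.Norms.L2Operator ComplexOrder Kronecker

noncomputable section

/-- The state-register index set, of cardinality `3 + 6 + 7 = 16`, corresponding to the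
block partition of rows and columns into sizes `3 + 6 + 7`. -/
abbrev StateIdx : Type := Fin 3 ⊕ (Fin 6 ⊕ Fin 7)

/-- The three `3 × 6` matrices `C^(1), C^(2), C^(3)` (here indexed by `Fin 3`). -/
def Cmat : Fin 3 → Matrix (Fin 3) (Fin 6) ℂ
  | 0 => !![1, 0, 0, 0, 0, 0; 0, 0, 0, 1, 0, 0; 0, 0, 0, 0, 1, 0]
  | 1 => !![0, 0, 0, 1, 0, 0; 0, 1, 0, 0, 0, 0; 0, 0, 0, 0, 0, 1]
  | 2 => !![0, 0, 0, 0, 1, 0; 0, 0, 0, 0, 0, 1; 0, 0, 1, 0, 0, 0]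

/-- `A^(α)`: the `16 × 16` matrix with `C^(α)` as its `(1,2)` block, `(C^(α))ᵀ` as its `(2,1)`
block, and zero blocks elsewhere, in the block partition `3 + (6 + 7)`. -/
def Amat (α : Fin 3) : Matrix StateIdx StateIdx ℂ :=
  Matrix.fromBlocks 0 (Matrix.fromCols (Cmat α) 0) (Matrix.fromRows (Cmat α)ᵀ 0) 0

/-- `B_cell = diag(ρ I₃, S_comp, I₇)`. -/
def Bcell (ρ : ℝ) (S : Matrix (Fin 6) (Fin 6) ℂ) : Matrix StateIdx StateIdx ℂ :=
  Matrix.fromBlocks ((ρ : ℂ) • 1) 0 0 (Matrix.fromBlocks S 0 0 1)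

/-- `M^(−1/2)`: the inverse of the unique positive definite square root of a positive
definite matrix `M`. -/
def invSqrt {ι : Type*} [Fintype ι] [DecidableEq ι] {M : Matrix ι ι ℂ}
    (hM : M.PosDef) : Matrix ι ι ℂ :=
  (hM.posSemidef.1.eigenvectorUnitary.1 * diagonal ((↑) ∘ (√·) ∘ hM.posSemidef.1.eigenvalues) *
    (star hM.posSemidef.1.eigenvectorUnitary : Matrix ι ι ℂ))⁻¹

/-- The spatial index set for `N` qubits, of cardinality `2^N`. -/
abbrev QubitIdx (N : ℕ) : Type := Fin N → Fin 2

def sigma01 : Matrix (Fin 2) (Fin 2) ℂ := !![0, 1; 0, 0]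

def sigma10 : Matrix (Fin 2) (Fin 2) ℂ := !![0, 0; 1, 0]

/-- The Kronecker (tensor) product `f 0 ⊗ f 1 ⊗ ⋯ ⊗ f (N−1)` of a family of `2 × 2`
matrices, realized on the index set `Fin N → Fin 2` (position `0` is the leftmost factor). -/
def tensorFamily {N : ℕ} (f : Fin N → Matrix (Fin 2) (Fin 2) ℂ) :
    Matrix (QubitIdx N) (QubitIdx N) ℂ :=
  Matrix.of fun x y => ∏ i, f i (x i) (y i)

/-- The factor at position `p ∈ {0, …, n−1}` of the pure tensor
`I₂^⊗(n−k) ⊗ a ⊗ b^⊗(k−1)` (for `1 ≤ k ≤ n`). -/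
def cellFactor (n k : ℕ) (a b : Matrix (Fin 2) (Fin 2) ℂ) (p : ℕ) :
    Matrix (Fin 2) (Fin 2) ℂ :=
  if p < n - k then 1 else if p = n - k then a else b

/-- `S_k^(α) = I₂^⊗(n(α−1)) ⊗ S_k^cell ⊗ I₂^⊗(n(3−α))` with
`S_k^cell = I₂^⊗(n−k) ⊗ σ01 ⊗ σ10^⊗(k−1) − I₂^⊗(n−k) ⊗ σ10 ⊗ σ01^⊗(k−1)`,
realized on `3n` qubits.  Here `α : Fin 3` is `0`-based and `1 ≤ k ≤ n`. -/
def Smat (n : ℕ) (α : Fin 3) (k : ℕ) :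
    Matrix (QubitIdx (3 * n)) (QubitIdx (3 * n)) ℂ :=
  tensorFamily (fun i =>
      if i.val / n = α.val then cellFactor n k sigma01 sigma10 (i.val % n) else 1) -
    tensorFamily (fun i =>
      if i.val / n = α.val then cellFactor n k sigma10 sigma01 (i.val % n) else 1)

/-- `D^(α) = (1/(2h)) ∑_{k=1}^n S_k^(α)`. -/
def Dmat (n : ℕ) (h : ℝ) (α : Fin 3) : Matrix (QubitIdx (3 * n)) (QubitIdx (3 * n)) ℂ :=
  (1 / (2 * (h : ℂ))) • ∑ k : Fin n, Smat n α (k.val + 1)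

/-- The rank-one projector `P_j = |φ_j⟩⟨φ_j|`. -/
def Pmat (φ : Fin 16 → StateIdx → ℂ) (j : Fin 16) : Matrix StateIdx StateIdx ℂ :=
  Matrix.vecMulVec (φ j) (star (φ j))

/-- `H_jk^(α) := P_j^(α) ⊗ (i λ_j^(α)/(2h)) S_k^(α)`. -/
def Hterm (n : ℕ) (h : ℝ) (lam : Fin 3 → Fin 16 → ℝ) (φ : Fin 3 → Fin 16 → StateIdx → ℂ)
    (α : Fin 3) (j : Fin 16) (k : Fin n) :
    Matrix (StateIdx × QubitIdx (3 * n)) (StateIdx × QubitIdx (3 * n)) ℂ :=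
  Pmat (φ α) j ⊗ₖ ((Complex.I * (lam α j : ℂ) / (2 * (h : ℂ))) • Smat n α (k.val + 1))

/-- The elastic-wave Hamiltonian `H = ∑_{α,j,k} H_jk^(α)`. -/
def Hfull (n : ℕ) (h : ℝ) (lam : Fin 3 → Fin 16 → ℝ) (φ : Fin 3 → Fin 16 → StateIdx → ℂ) :
    Matrix (StateIdx × QubitIdx (3 * n)) (StateIdx × QubitIdx (3 * n)) ℂ :=
  ∑ α : Fin 3, ∑ j : Fin 16, ∑ k : Fin n, Hterm n h lam φ α j k

/-- Ordered product `f (m−1) * f (m−2) * ⋯ * f 0` (largest index leftmost). -/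
def prodDesc {M : Type*} [Monoid M] {m : ℕ} (f : Fin m → M) : M :=
  ((List.finRange m).reverse.map f).prod

/-- Ordered product `f 0 * f 1 * ⋯ * f (m−1)` (smallest index leftmost). -/
def prodAsc {M : Type*} [Monoid M] {m : ℕ} (f : Fin m → M) : M :=
  ((List.finRange m).map f).prod

/-- The first-order Trotter operator `U₁(τ)`: the ordered product of the factors
`exp(−i H_jk^(α) τ)` over all triples `(α, j, k)`, in decreasing lexicographic order
(the factor with the largest `(α, j, k)` leftmost, the factor with the smallest rightmost). -/
def U1 (n : ℕ) (h : ℝ) (lam : Fin 3 → Fin 16 → ℝ) (φ : Fin 3 → Fin 16 → StateIdx → ℂ)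
    (τ : ℝ) : Matrix (StateIdx × QubitIdx (3 * n)) (StateIdx × QubitIdx (3 * n)) ℂ :=
  prodDesc fun α : Fin 3 => prodDesc fun j : Fin 16 => prodDesc fun k : Fin n =>
    NormedSpace.exp ((-(Complex.I * (τ : ℂ))) • Hterm n h lam φ α j k)

/-- The reversed-order product of the factors `exp(−i H_jk^(α) τ)`: increasing
lexicographic order in `(α, j, k)`. -/
def U1rev (n : ℕ) (h : ℝ) (lam : Fin 3 → Fin 16 → ℝ) (φ : Fin 3 → Fin 16 → StateIdx → ℂ)
    (τ : ℝ) : Matrix (StateIdx × QubitIdx (3 * n)) (StateIdx × QubitIdx (3 * n)) ℂ :=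
  prodAsc fun α : Fin 3 => prodAsc fun j : Fin 16 => prodAsc fun k : Fin n =>
    NormedSpace.exp ((-(Complex.I * (τ : ℂ))) • Hterm n h lam φ α j k)

/-- The second-order (symmetric) Trotter operator `U₂(τ) = U₁(τ/2) · Ũ₁(τ/2)`. -/
def U2 (n : ℕ) (h : ℝ) (lam : Fin 3 → Fin 16 → ℝ) (φ : Fin 3 → Fin 16 → StateIdx → ℂ)
    (τ : ℝ) : Matrix (StateIdx × QubitIdx (3 * n)) (StateIdx × QubitIdx (3 * n)) ℂ :=
  U1 n h lam φ (τ / 2) * U1rev n h lam φ (τ / 2)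

end

set_option linter.unusedSectionVars false
set_option linter.unusedVariables false
set_option maxRecDepth 20000

noncomputable section
namespace ElasticAux

variable {m n p q : Type*} [Fintype m] [Fintype n] [Fintype p] [Fintype q]
  [DecidableEq m] [DecidableEq n] [DecidableEq p] [DecidableEq q]


variable {m n p q : Type*} [Fintype m] [Fintype n] [Fintype p] [Fintype q]
  [DecidableEq m] [DecidableEq n] [DecidableEq p] [DecidableEq q]

lemma opNorm_le_of_mulVec (A : Matrix m n ℂ) {c : ℝ} (hc : 0 ≤ c)
    (H : ∀ v : EuclideanSpace ℂ n,
      ‖(WithLp.equiv 2 (m → ℂ)).symm (A *ᵥ (WithLp.equiv 2 (n → ℂ)) v)‖ ≤ c * ‖v‖) :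
    ‖A‖ ≤ c := by
  rw [Matrix.l2_opNorm_def]
  refine ContinuousLinearMap.opNorm_le_bound _ hc fun x => ?_
  simpa [Matrix.toEuclideanLin_apply] using H x

lemma sq_norm_euclidean (v : EuclideanSpace ℂ n) : ‖v‖ ^ 2 = ∑ i, ‖v i‖ ^ 2 := by
  rw [EuclideanSpace.norm_eq, Real.sq_sqrt]
  positivity

lemma norm_mulVec_sq (A : Matrix m n ℂ) (f : n → ℂ) :
    ∑ i, ‖(A *ᵥ f) i‖ ^ 2 ≤ ‖A‖ ^ 2 * ∑ k, ‖f k‖ ^ 2 := by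
  have h : ‖(WithLp.equiv 2 (m → ℂ)).symm (A *ᵥ f)‖ ≤
      ‖A‖ * ‖(WithLp.equiv 2 (n → ℂ)).symm f‖ :=
    Matrix.l2_opNorm_mulVec A ((WithLp.equiv 2 (n → ℂ)).symm f)
  have h2 := mul_le_mul h h (norm_nonneg _) (le_trans (norm_nonneg _) h)
  calc ∑ i, ‖(A *ᵥ f) i‖ ^ 2
      = ‖(WithLp.equiv 2 (m → ℂ)).symm (A *ᵥ f)‖ ^ 2 :=
        (sq_norm_euclidean ((WithLp.equiv 2 (m → ℂ)).symm (A *ᵥ f))).symm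
    _ ≤ (‖A‖ * ‖(WithLp.equiv 2 (n → ℂ)).symm f‖) ^ 2 := by rw [sq, sq]; exact h2
    _ = ‖A‖ ^ 2 * ∑ k, ‖f k‖ ^ 2 := by rw [mul_pow, sq_norm_euclidean]; rfl

lemma norm_le_of_sq_le {a c : ℝ} (hc : 0 ≤ c) (h : a ^ 2 ≤ c ^ 2) (ha : 0 ≤ a) : a ≤ c := by
  nlinarith

lemma kron_one_right_norm (A : Matrix m m ℂ) (p : Type*) [Fintype p] [DecidableEq p] :
    ‖A ⊗ₖ (1 : Matrix p p ℂ)‖ ≤ ‖A‖ := by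
  refine opNorm_le_of_mulVec _ (norm_nonneg A) fun v => ?_
  refine norm_le_of_sq_le (by positivity) ?_ (norm_nonneg _)
  rw [sq_norm_euclidean, mul_pow, sq_norm_euclidean]
  have key : ∀ i j, ((A ⊗ₖ (1 : Matrix p p ℂ)) *ᵥ (WithLp.equiv 2 (m × p → ℂ)) v) (i, j)
      = (A *ᵥ fun k => v (k, j)) i := by
    intro i j
    simp [Matrix.mulVec, dotProduct, Fintype.sum_prod_type, Matrix.one_apply,
      mul_ite, ite_mul, zero_mul, mul_zero, Finset.sum_ite_eq, Finset.sum_ite_eq']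
  calc ∑ x : m × p, ‖((A ⊗ₖ (1 : Matrix p p ℂ)) *ᵥ (WithLp.equiv 2 (m × p → ℂ)) v) x‖ ^ 2
      = ∑ j, ∑ i, ‖(A *ᵥ fun k => v (k, j)) i‖ ^ 2 := by
        rw [Fintype.sum_prod_type, Finset.sum_comm]
        exact Finset.sum_congr rfl fun j _ => Finset.sum_congr rfl fun i _ => by rw [key]
    _ ≤ ∑ j, ‖A‖ ^ 2 * ∑ k, ‖v (k, j)‖ ^ 2 := by
        exact Finset.sum_le_sum fun j _ => norm_mulVec_sq A _
    _ = ‖A‖ ^ 2 * ∑ x : m × p, ‖v x‖ ^ 2 := by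
        rw [← Finset.mul_sum, Fintype.sum_prod_type, Finset.sum_comm]

lemma kron_one_left_norm (B : Matrix p p ℂ) (m : Type*) [Fintype m] [DecidableEq m] :
    ‖(1 : Matrix m m ℂ) ⊗ₖ B‖ ≤ ‖B‖ := by
  refine opNorm_le_of_mulVec _ (norm_nonneg B) fun v => ?_
  refine norm_le_of_sq_le (by positivity) ?_ (norm_nonneg _)
  rw [sq_norm_euclidean, mul_pow, sq_norm_euclidean]
  have key : ∀ i j, (((1 : Matrix m m ℂ) ⊗ₖ B) *ᵥ (WithLp.equiv 2 (m × p → ℂ)) v) (i, j)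
      = (B *ᵥ fun l => v (i, l)) j := by
    intro i j
    simp [Matrix.mulVec, dotProduct, Fintype.sum_prod_type, Matrix.one_apply,
      mul_ite, ite_mul, zero_mul, mul_zero, Finset.sum_ite_eq, Finset.sum_ite_eq']
  calc ∑ x : m × p, ‖(((1 : Matrix m m ℂ) ⊗ₖ B) *ᵥ (WithLp.equiv 2 (m × p → ℂ)) v) x‖ ^ 2
      = ∑ i, ∑ j, ‖(B *ᵥ fun l => v (i, l)) j‖ ^ 2 := by
        rw [Fintype.sum_prod_type]
        exact Finset.sum_congr rfl fun i _ => Finset.sum_congr rfl fun j _ => by rw [key]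
    _ ≤ ∑ i, ‖B‖ ^ 2 * ∑ l, ‖v (i, l)‖ ^ 2 := by
        exact Finset.sum_le_sum fun i _ => norm_mulVec_sq B _
    _ = ‖B‖ ^ 2 * ∑ x : m × p, ‖v x‖ ^ 2 := by
        rw [← Finset.mul_sum, Fintype.sum_prod_type]

lemma kron_norm_le (A : Matrix m m ℂ) (B : Matrix p p ℂ) : ‖A ⊗ₖ B‖ ≤ ‖A‖ * ‖B‖ := by
  have : A ⊗ₖ B = (A ⊗ₖ (1 : Matrix p p ℂ)) * ((1 : Matrix m m ℂ) ⊗ₖ B) := by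
    rw [← Matrix.mul_kronecker_mul, Matrix.mul_one, Matrix.one_mul]
  rw [this]
  calc ‖(A ⊗ₖ (1 : Matrix p p ℂ)) * ((1 : Matrix m m ℂ) ⊗ₖ B)‖
      ≤ ‖A ⊗ₖ (1 : Matrix p p ℂ)‖ * ‖(1 : Matrix m m ℂ) ⊗ₖ B‖ := Matrix.l2_opNorm_mul _ _
    _ ≤ ‖A‖ * ‖B‖ := mul_le_mul (kron_one_right_norm A p) (kron_one_left_norm B m)
        (norm_nonneg _) (norm_nonneg _)


lemma fromBlocks_offdiag_norm_le {X : Matrix m q ℂ} {Y : Matrix p n ℂ} {t : ℝ}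
    (hX : ‖X‖ ≤ t) (hY : ‖Y‖ ≤ t) :
    ‖Matrix.fromBlocks (0 : Matrix m n ℂ) X Y (0 : Matrix p q ℂ)‖ ≤ t := by
  have ht : 0 ≤ t := le_trans (norm_nonneg _) hX
  refine opNorm_le_of_mulVec _ ht fun v => ?_
  refine norm_le_of_sq_le (by positivity) ?_ (norm_nonneg _)
  rw [sq_norm_euclidean, mul_pow, sq_norm_euclidean]
  set M := Matrix.fromBlocks (0 : Matrix m n ℂ) X Y (0 : Matrix p q ℂ) with hM
  have k1 : ∀ i : m, (M *ᵥ (WithLp.equiv 2 ((n ⊕ q) → ℂ)) v) (Sum.inl i)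
      = (X *ᵥ fun l => v (Sum.inr l)) i := by
    intro i
    simp [hM, Matrix.mulVec, dotProduct, Fintype.sum_sum_type, Matrix.fromBlocks]
  have k2 : ∀ i : p, (M *ᵥ (WithLp.equiv 2 ((n ⊕ q) → ℂ)) v) (Sum.inr i)
      = (Y *ᵥ fun k => v (Sum.inl k)) i := by
    intro i
    simp [hM, Matrix.mulVec, dotProduct, Fintype.sum_sum_type, Matrix.fromBlocks]
  rw [Fintype.sum_sum_type, Fintype.sum_sum_type]
  simp only [WithLp.equiv_symm_apply, PiLp.toLp_apply, k1, k2]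
  have hX2 := norm_mulVec_sq X (fun l => v (Sum.inr l))
  have hY2 := norm_mulVec_sq Y (fun k => v (Sum.inl k))
  have hXt : ‖X‖ ^ 2 ≤ t ^ 2 := by nlinarith [norm_nonneg X]
  have hYt : ‖Y‖ ^ 2 ≤ t ^ 2 := by nlinarith [norm_nonneg Y]
  have n1 : (0:ℝ) ≤ ∑ l : q, ‖v (Sum.inr l)‖ ^ 2 := by positivity
  have n2 : (0:ℝ) ≤ ∑ k : n, ‖v (Sum.inl k)‖ ^ 2 := by positivity
  nlinarith [hX2, hY2]

lemma fromColumns_zero_norm_le (X : Matrix m n ℂ) (q : Type*) [Fintype q] [DecidableEq q] :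
    ‖Matrix.fromCols X (0 : Matrix m q ℂ)‖ ≤ ‖X‖ := by
  refine opNorm_le_of_mulVec _ (norm_nonneg _) fun v => ?_
  refine norm_le_of_sq_le (by positivity) ?_ (norm_nonneg _)
  rw [sq_norm_euclidean, mul_pow, sq_norm_euclidean]
  have k1 : ∀ i : m, (Matrix.fromCols X (0 : Matrix m q ℂ) *ᵥ (WithLp.equiv 2 ((n ⊕ q) → ℂ)) v) i
      = (X *ᵥ fun k => v (Sum.inl k)) i := by
    intro i
    simp [Matrix.fromCols, Matrix.mulVec, dotProduct, Fintype.sum_sum_type]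
  simp only [WithLp.equiv_symm_apply, PiLp.toLp_apply, k1]
  have hX2 := norm_mulVec_sq X (fun k => v (Sum.inl k))
  have : ∑ k : n, ‖v (Sum.inl k)‖ ^ 2 ≤ ∑ x : n ⊕ q, ‖v x‖ ^ 2 := by
    rw [Fintype.sum_sum_type]
    have : (0:ℝ) ≤ ∑ l : q, ‖v (Sum.inr l)‖ ^ 2 := by positivity
    linarith
  nlinarith [norm_nonneg X]


section Tensor

lemma tensorFamily_mul {N : ℕ} (f g : Fin N → Matrix (Fin 2) (Fin 2) ℂ) :
    tensorFamily f * tensorFamily g = tensorFamily (fun i => f i * g i) := by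
  ext x y
  simp only [tensorFamily, Matrix.mul_apply, Matrix.of_apply]
  rw [Finset.prod_univ_sum, Fintype.piFinset_univ]
  exact Finset.sum_congr rfl fun j _ => (Finset.prod_mul_distrib).symm

lemma tensorFamily_conjTranspose {N : ℕ} (f : Fin N → Matrix (Fin 2) (Fin 2) ℂ) :
    (tensorFamily f)ᴴ = tensorFamily (fun i => (f i)ᴴ) := by
  ext x y
  simp only [tensorFamily, Matrix.conjTranspose_apply, Matrix.of_apply, star_prod]

lemma tensorFamily_zero {N : ℕ} (f : Fin N → Matrix (Fin 2) (Fin 2) ℂ) (i0 : Fin N)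
    (h : f i0 = 0) : tensorFamily f = 0 := by
  ext x y
  simp only [tensorFamily, Matrix.of_apply, Matrix.zero_apply]
  exact Finset.prod_eq_zero (Finset.mem_univ i0) (by rw [h]; rfl)

lemma tensorFamily_one {N : ℕ} : tensorFamily (fun _ : Fin N => (1 : Matrix (Fin 2) (Fin 2) ℂ)) = 1 := by
  ext x y
  simp only [tensorFamily, Matrix.of_apply, Matrix.one_apply, Finset.prod_boole]
  simp [funext_iff]

end Tensor

section Shift

def e00 : Matrix (Fin 2) (Fin 2) ℂ := !![1,0;0,0]
def e11 : Matrix (Fin 2) (Fin 2) ℂ := !![0,0;0,1]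

lemma m_s10_s01 : sigma10 * sigma01 = e11 := by
  ext i j; fin_cases i <;> fin_cases j <;>
    simp [sigma01, sigma10, e11, Matrix.mul_apply, Fin.sum_univ_two]
lemma m_s01_s10 : sigma01 * sigma10 = e00 := by
  ext i j; fin_cases i <;> fin_cases j <;>
    simp [sigma01, sigma10, e00, Matrix.mul_apply, Fin.sum_univ_two]
lemma m_s01_s01 : sigma01 * sigma01 = 0 := by
  ext i j; fin_cases i <;> fin_cases j <;>
    simp [sigma01, Matrix.mul_apply, Fin.sum_univ_two]
lemma m_s10_s10 : sigma10 * sigma10 = 0 := by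
  ext i j; fin_cases i <;> fin_cases j <;>
    simp [sigma10, Matrix.mul_apply, Fin.sum_univ_two]
lemma m_e11_e11 : e11 * e11 = e11 := by
  ext i j; fin_cases i <;> fin_cases j <;>
    simp [e11, Matrix.mul_apply, Fin.sum_univ_two]
lemma m_e00_e00 : e00 * e00 = e00 := by
  ext i j; fin_cases i <;> fin_cases j <;>
    simp [e00, Matrix.mul_apply, Fin.sum_univ_two]
lemma m_e11_e00 : e11 * e00 = 0 := by
  ext i j; fin_cases i <;> fin_cases j <;>
    simp [e00, e11, Matrix.mul_apply, Fin.sum_univ_two]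
lemma m_e00_e11 : e00 * e11 = 0 := by
  ext i j; fin_cases i <;> fin_cases j <;>
    simp [e00, e11, Matrix.mul_apply, Fin.sum_univ_two]
lemma m_s01_star : sigma01ᴴ = sigma10 := by
  ext i j; fin_cases i <;> fin_cases j <;> simp [sigma01, sigma10]
lemma m_s10_star : sigma10ᴴ = sigma01 := by
  ext i j; fin_cases i <;> fin_cases j <;> simp [sigma01, sigma10]

variable {nn k k' : ℕ}

lemma cf_conj (nn k : ℕ) (pp : ℕ) :
    (cellFactor nn k sigma01 sigma10 pp)ᴴ = cellFactor nn k sigma10 sigma01 pp := by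
  unfold cellFactor
  split_ifs <;> simp [m_s01_star, m_s10_star]

lemma cf_mul_same (nn k : ℕ) (pp : ℕ) :
    cellFactor nn k sigma10 sigma01 pp * cellFactor nn k sigma01 sigma10 pp =
      cellFactor nn k e11 e00 pp := by
  unfold cellFactor
  split_ifs <;> simp [m_s10_s01, m_s01_s10]

lemma cf_mul_ne (hk1 : 1 ≤ k) (hkn : k ≤ nn) (hk1' : 1 ≤ k') (hkn' : k' ≤ nn) (hne : k ≠ k') :
    cellFactor nn k sigma10 sigma01 (nn - min k k') *
      cellFactor nn k' sigma01 sigma10 (nn - min k k') = 0 := by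
  rcases Nat.lt_or_ge k k' with hlt | hge
  · have hmin : min k k' = k := by omega
    rw [hmin]
    unfold cellFactor
    rw [if_neg (by omega), if_pos rfl, if_neg (by omega), if_neg (by omega), m_s10_s10]
  · have hlt : k' < k := by omega
    have hmin : min k k' = k' := by omega
    rw [hmin]
    unfold cellFactor
    rw [if_neg (by omega), if_neg (by omega), if_neg (by omega), if_pos rfl, m_s01_s01]

lemma dd_mul_same (nn k : ℕ) (pp : ℕ) :
    cellFactor nn k e11 e00 pp * cellFactor nn k e11 e00 pp = cellFactor nn k e11 e00 pp := by
  unfold cellFactor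
  split_ifs <;> simp [m_e11_e11, m_e00_e00]

lemma dd_mul_ne (hk1 : 1 ≤ k) (hkn : k ≤ nn) (hk1' : 1 ≤ k') (hkn' : k' ≤ nn) (hne : k ≠ k') :
    cellFactor nn k e11 e00 (nn - min k k') * cellFactor nn k' e11 e00 (nn - min k k') = 0 := by
  rcases Nat.lt_or_ge k k' with hlt | hge
  · have hmin : min k k' = k := by omega
    rw [hmin]
    unfold cellFactor
    rw [if_neg (by omega), if_pos rfl, if_neg (by omega), if_neg (by omega), m_e11_e00]
  · have hlt : k' < k := by omega
    have hmin : min k k' = k' := by omega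
    rw [hmin]
    unfold cellFactor
    rw [if_neg (by omega), if_neg (by omega), if_neg (by omega), if_pos rfl, m_e00_e11]

/-- One pure-tensor shift term. -/
def Tf (n : ℕ) (α : Fin 3) (k : ℕ) : Fin (3 * n) → Matrix (Fin 2) (Fin 2) ℂ :=
  fun i => if i.val / n = α.val then cellFactor n k sigma01 sigma10 (i.val % n) else 1

def Tf' (n : ℕ) (α : Fin 3) (k : ℕ) : Fin (3 * n) → Matrix (Fin 2) (Fin 2) ℂ :=
  fun i => if i.val / n = α.val then cellFactor n k sigma10 sigma01 (i.val % n) else 1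

def Dd (n : ℕ) (α : Fin 3) (k : ℕ) : Matrix (QubitIdx (3 * n)) (QubitIdx (3 * n)) ℂ :=
  tensorFamily (fun i => if i.val / n = α.val then cellFactor n k e11 e00 (i.val % n) else 1)

lemma TH (n : ℕ) (α : Fin 3) (k : ℕ) :
    (tensorFamily (Tf n α k))ᴴ = tensorFamily (Tf' n α k) := by
  rw [tensorFamily_conjTranspose]
  refine congrArg tensorFamily (funext fun i => ?_)
  by_cases hc : i.val / n = α.val <;> simp [Tf, Tf', hc, cf_conj]

/-- The special position inside block `α` used to kill cross terms. -/
def i0 (n : ℕ) (α : Fin 3) (k k' : ℕ) (hk1 : 1 ≤ k) (hkn : k ≤ n) (hk1' : 1 ≤ k') :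
    Fin (3 * n) :=
  ⟨n * α.val + (n - min k k'), by
    have h2 : α.val ≤ 2 := by omega
    have h3 : n * α.val ≤ n * 2 := Nat.mul_le_mul_left n h2
    omega⟩

lemma i0_div (n : ℕ) (α : Fin 3) (k k' : ℕ) (hk1 : 1 ≤ k) (hkn : k ≤ n) (hk1' : 1 ≤ k') :
    (i0 n α k k' hk1 hkn hk1').val / n = α.val := by
  have hn0 : 0 < n := by omega
  have hlt : n - min k k' < n := by omega
  simp only [i0]
  rw [Nat.mul_add_div hn0, Nat.div_eq_of_lt hlt, add_zero]

lemma i0_mod (n : ℕ) (α : Fin 3) (k k' : ℕ) (hk1 : 1 ≤ k) (hkn : k ≤ n) (hk1' : 1 ≤ k') :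
    (i0 n α k k' hk1 hkn hk1').val % n = n - min k k' := by
  have hlt : n - min k k' < n := by omega
  simp only [i0]
  rw [Nat.mul_add_mod, Nat.mod_eq_of_lt hlt]

lemma TT_mul_ne (n : ℕ) (α : Fin 3) (hk1 : 1 ≤ k) (hkn : k ≤ n) (hk1' : 1 ≤ k') (hkn' : k' ≤ n)
    (hne : k ≠ k') : tensorFamily (Tf' n α k) * tensorFamily (Tf n α k') = 0 := by
  rw [tensorFamily_mul]
  refine tensorFamily_zero _ (i0 n α k k' hk1 hkn hk1') ?_
  simp only [Tf, Tf', i0_div n α k k' hk1 hkn hk1', if_pos rfl, i0_mod n α k k' hk1 hkn hk1']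
  exact cf_mul_ne hk1 hkn hk1' hkn' hne

lemma TT_mul_same (n : ℕ) (α : Fin 3) (k : ℕ) :
    tensorFamily (Tf' n α k) * tensorFamily (Tf n α k) = Dd n α k := by
  rw [tensorFamily_mul]
  unfold Dd
  refine congrArg tensorFamily (funext fun i => ?_)
  by_cases hc : i.val / n = α.val <;> simp [Tf, Tf', hc, cf_mul_same]

lemma Dd_mul_ne (n : ℕ) (α : Fin 3) (hk1 : 1 ≤ k) (hkn : k ≤ n) (hk1' : 1 ≤ k') (hkn' : k' ≤ n)
    (hne : k ≠ k') : Dd n α k * Dd n α k' = 0 := by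
  unfold Dd
  rw [tensorFamily_mul]
  refine tensorFamily_zero _ (i0 n α k k' hk1 hkn hk1') ?_
  simp only [i0_div n α k k' hk1 hkn hk1', if_pos rfl, i0_mod n α k k' hk1 hkn hk1']
  exact dd_mul_ne hk1 hkn hk1' hkn' hne

lemma Dd_mul_same (n : ℕ) (α : Fin 3) (k : ℕ) : Dd n α k * Dd n α k = Dd n α k := by
  unfold Dd
  rw [tensorFamily_mul]
  refine congrArg tensorFamily (funext fun i => ?_)
  by_cases hc : i.val / n = α.val <;> simp [hc, dd_mul_same]

lemma P_norm_le (n : ℕ) (α : Fin 3) :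
    ‖∑ k : Fin n, tensorFamily (Tf n α (k.val + 1))‖ ≤ 1 := by
  set P : Matrix (QubitIdx (3 * n)) (QubitIdx (3 * n)) ℂ :=
    ∑ k : Fin n, tensorFamily (Tf n α (k.val + 1)) with hP
  have bound : ∀ k : Fin n, 1 ≤ k.val + 1 ∧ k.val + 1 ≤ n := fun k => ⟨by omega, k.isLt⟩
  have hQ : Pᴴ * P = ∑ k : Fin n, Dd n α (k.val + 1) := by
    rw [hP, Matrix.conjTranspose_sum, Finset.sum_mul_sum]
    have : ∀ k k' : Fin n, (tensorFamily (Tf n α (k.val + 1)))ᴴ *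
        tensorFamily (Tf n α (k'.val + 1)) =
        if k = k' then Dd n α (k.val + 1) else 0 := by
      intro k k'
      rw [TH]
      by_cases h : k = k'
      · subst h; rw [TT_mul_same, if_pos rfl]
      · rw [TT_mul_ne n α (bound k).1 (bound k).2 (bound k').1 (bound k').2
          (fun hh => h (Fin.ext (by omega))), if_neg h]
    rw [Finset.sum_congr rfl fun k _ => Finset.sum_congr rfl fun k' _ => this k k']
    exact Finset.sum_congr rfl fun k _ => by simp
  have hQQ : (Pᴴ * P) * (Pᴴ * P) = Pᴴ * P := by
    rw [hQ, Finset.sum_mul_sum]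
    have : ∀ k k' : Fin n, Dd n α (k.val + 1) * Dd n α (k'.val + 1) =
        if k = k' then Dd n α (k.val + 1) else 0 := by
      intro k k'
      by_cases h : k = k'
      · subst h; rw [Dd_mul_same, if_pos rfl]
      · rw [Dd_mul_ne n α (bound k).1 (bound k).2 (bound k').1 (bound k').2
          (fun hh => h (Fin.ext (by omega))), if_neg h]
    rw [Finset.sum_congr rfl fun k _ => Finset.sum_congr rfl fun k' _ => this k k']
    exact Finset.sum_congr rfl fun k _ => by simp
  have hN : ‖Pᴴ * P‖ ≤ 1 := by
    have h1 : ‖(Pᴴ * P)ᴴ * (Pᴴ * P)‖ = ‖Pᴴ * P‖ * ‖Pᴴ * P‖ :=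
      Matrix.l2_opNorm_conjTranspose_mul_self _
    have h2 : (Pᴴ * P)ᴴ * (Pᴴ * P) = Pᴴ * P := by
      rw [show (Pᴴ * P)ᴴ = Pᴴ * P by
        rw [Matrix.conjTranspose_mul, Matrix.conjTranspose_conjTranspose], hQQ]
    rw [h2] at h1
    nlinarith [norm_nonneg (Pᴴ * P)]
  have h3 : ‖P‖ * ‖P‖ ≤ 1 := by rw [← Matrix.l2_opNorm_conjTranspose_mul_self]; exact hN
  nlinarith [norm_nonneg P]

lemma Dmat_norm_le (n : ℕ) {h : ℝ} (hh : 0 < h) (α : Fin 3) : ‖Dmat n h α‖ ≤ 1 / h := by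
  set P : Matrix (QubitIdx (3 * n)) (QubitIdx (3 * n)) ℂ :=
    ∑ k : Fin n, tensorFamily (Tf n α (k.val + 1)) with hP
  have hsum : ∑ k : Fin n, Smat n α (k.val + 1) = P - Pᴴ := by
    have hs : ∀ k : Fin n, Smat n α (k.val + 1) =
        tensorFamily (Tf n α (k.val + 1)) - tensorFamily (Tf' n α (k.val + 1)) := fun k => rfl
    rw [Finset.sum_congr rfl fun k _ => hs k, Finset.sum_sub_distrib, hP,
      Matrix.conjTranspose_sum]
    congr 1
    exact Finset.sum_congr rfl fun k _ => (TH n α (k.val + 1)).symm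
  have hnorm : ‖P - Pᴴ‖ ≤ 2 := by
    calc ‖P - Pᴴ‖ ≤ ‖P‖ + ‖Pᴴ‖ := norm_sub_le _ _
      _ = ‖P‖ + ‖P‖ := by rw [Matrix.l2_opNorm_conjTranspose]
      _ ≤ 2 := by have := P_norm_le n α; rw [← hP] at this; linarith
  have hc : ‖(1 / (2 * (h : ℂ)))‖ = 1 / (2 * h) := by
    rw [show (1 / (2 * (h : ℂ))) = (((1 / (2 * h) : ℝ)) : ℂ) by push_cast; ring,
      Complex.norm_real, Real.norm_of_nonneg (by positivity)]
  calc ‖Dmat n h α‖ = ‖(1 / (2 * (h : ℂ)))‖ * ‖P - Pᴴ‖ := by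
        rw [Dmat, hsum, norm_smul]
    _ ≤ (1 / (2 * h)) * 2 := by rw [hc]; exact mul_le_mul_of_nonneg_left hnorm (by positivity)
    _ = 1 / h := by field_simp

end Shift

section State

def msqrt {ι : Type*} [Fintype ι] [DecidableEq ι] {M : Matrix ι ι ℂ}
    (hM : M.PosDef) : Matrix ι ι ℂ :=
  hM.posSemidef.1.eigenvectorUnitary.1 * diagonal ((↑) ∘ (√·) ∘ hM.posSemidef.1.eigenvalues) *
    (star hM.posSemidef.1.eigenvectorUnitary : Matrix ι ι ℂ)

lemma invSqrt_eq {ι : Type*} [Fintype ι] [DecidableEq ι] {M : Matrix ι ι ℂ}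
    (hM : M.PosDef) : invSqrt hM = (msqrt hM)⁻¹ := rfl

section MO
open scoped MatrixOrder

lemma msqrt_eq_cfc {ι : Type*} [Fintype ι] [DecidableEq ι] {M : Matrix ι ι ℂ}
    (hM : M.PosDef) : msqrt hM = CFC.sqrt M := by
  rw [CFC.sqrt_eq_cfc, cfc_nnreal_eq_real _ M hM.posSemidef.nonneg, hM.posSemidef.1.cfc_eq]
  simp only [IsHermitian.cfc, Unitary.conjStarAlgAut_apply, msqrt]
  unfold Real.sqrt
  rfl

lemma msqrt_posSemidef {ι : Type*} [Fintype ι] [DecidableEq ι] {M : Matrix ι ι ℂ}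
    (hM : M.PosDef) : (msqrt hM).PosSemidef := by
  rw [msqrt_eq_cfc]
  exact (CFC.sqrt_nonneg M).posSemidef

lemma msqrt_mul_self {ι : Type*} [Fintype ι] [DecidableEq ι] {M : Matrix ι ι ℂ}
    (hM : M.PosDef) : msqrt hM * msqrt hM = M := by
  rw [msqrt_eq_cfc]
  exact CFC.sqrt_mul_sqrt_self M hM.posSemidef.nonneg

lemma eq_msqrt {ι : Type*} [Fintype ι] [DecidableEq ι] {M V : Matrix ι ι ℂ}
    (hM : M.PosDef) (hV : V.PosSemidef) (h : V ^ 2 = M) : V = msqrt hM := by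
  rw [msqrt_eq_cfc]
  exact (CFC.sqrt_unique (by rw [← pow_two]; exact h) hV.nonneg).symm

end MO

lemma fromRows_zero_norm_le (X : Matrix m n ℂ) (q : Type*) [Fintype q] [DecidableEq q] :
    ‖Matrix.fromRows X (0 : Matrix q n ℂ)‖ ≤ ‖X‖ := by
  refine opNorm_le_of_mulVec _ (norm_nonneg _) fun v => ?_
  refine norm_le_of_sq_le (by positivity) ?_ (norm_nonneg _)
  rw [sq_norm_euclidean, mul_pow, sq_norm_euclidean]
  have k1 : ∀ i : m, (Matrix.fromRows X (0 : Matrix q n ℂ) *ᵥ (WithLp.equiv 2 (n → ℂ)) v)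
      (Sum.inl i) = (X *ᵥ fun k => v k) i := by
    intro i; simp [Matrix.mulVec, dotProduct]
  have k2 : ∀ i : q, (Matrix.fromRows X (0 : Matrix q n ℂ) *ᵥ (WithLp.equiv 2 (n → ℂ)) v)
      (Sum.inr i) = 0 := by
    intro i; simp [Matrix.mulVec, dotProduct]
  rw [Fintype.sum_sum_type]
  simp only [WithLp.equiv_symm_apply, PiLp.toLp_apply, k1, k2, norm_zero]
  have hX2 := norm_mulVec_sq X (fun k => v k)
  simpa using hX2

lemma matrix_norm_one {ι : Type*} [Fintype ι] [DecidableEq ι] [Nonempty ι] :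
    ‖(1 : Matrix ι ι ℂ)‖ = 1 := by
  rw [Matrix.cstar_norm_def, _root_.map_one]
  exact norm_one

lemma vec6_five (a b c d e f : ℂ) : ![a,b,c,d,e,f] 5 = f := rfl
lemma vec6_four (a b c d e f : ℂ) : ![a,b,c,d,e,f] 4 = e := rfl

lemma C_mul_CH (α : Fin 3) : Cmat α * (Cmat α)ᴴ = 1 := by
  fin_cases α <;>
    · ext i j
      fin_cases i <;> fin_cases j <;>
        simp [Cmat, Matrix.mul_apply, Fin.sum_univ_six, Matrix.conjTranspose_apply,
          Matrix.one_apply, vec6_five, vec6_four, Matrix.vecHead, Matrix.vecTail]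

lemma C_transpose_eq (α : Fin 3) : (Cmat α)ᵀ = (Cmat α)ᴴ := by
  fin_cases α <;>
    · ext i j
      fin_cases i <;> fin_cases j <;> simp [Cmat, vec6_five, vec6_four, Matrix.vecHead, Matrix.vecTail]

lemma C_norm_le (α : Fin 3) : ‖Cmat α‖ ≤ 1 := by
  have h := Matrix.l2_opNorm_conjTranspose_mul_self ((Cmat α)ᴴ)
  rw [Matrix.conjTranspose_conjTranspose, C_mul_CH, matrix_norm_one] at h
  have h2 : ‖(Cmat α)ᴴ‖ = ‖Cmat α‖ := Matrix.l2_opNorm_conjTranspose _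
  nlinarith [norm_nonneg (Cmat α)]

lemma posSemidef_fromBlocks {A : Matrix m m ℂ} {D : Matrix p p ℂ}
    (hA : A.PosSemidef) (hD : D.PosSemidef) : (Matrix.fromBlocks A 0 0 D).PosSemidef := by
  rw [Matrix.posSemidef_iff_dotProduct_mulVec]
  constructor
  · show (Matrix.fromBlocks A 0 0 D)ᴴ = _
    simp [Matrix.fromBlocks_conjTranspose]
    exact ⟨hA.1, hD.1⟩
  · intro x
    have hx : x = Sum.elim (x ∘ Sum.inl) (x ∘ Sum.inr) := (Sum.elim_comp_inl_inr x).symm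
    rw [hx, Matrix.fromBlocks_mulVec]
    simp only [Matrix.zero_mulVec, add_zero, zero_add, Function.star_sumElim,
      sumElim_dotProduct_sumElim]
    exact add_nonneg (hA.dotProduct_mulVec_nonneg _) (hD.dotProduct_mulVec_nonneg _)

lemma smul_one_posSemidef {s : ℝ} (hs : 0 ≤ s) {ι : Type*} [Fintype ι] [DecidableEq ι] :
    (((s : ℂ)) • (1 : Matrix ι ι ℂ)).PosSemidef := by
  rw [Matrix.smul_one_eq_diagonal]
  exact Matrix.PosSemidef.diagonal fun i => by
    simpa using Complex.real_le_real.mpr hs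

end State
end ElasticAux
end

/-- **Operator-norm bound on the elastic-wave Hamiltonian**
`H = ∑_α (i B_cell^(−1/2) A^(α) B_cell^(−1/2)) ⊗ D^(α)`:
`‖H‖ ≤ (3/h) ρ^(−1/2) ‖S_comp^(−1/2)‖`. -/
theorem elastic_hamiltonian_norm_bound
    (ρ : ℝ) (hρ : 0 < ρ) (S : Matrix (Fin 6) (Fin 6) ℂ) (hS : S.PosDef)
    (hB : (Bcell ρ S).PosDef)
    (n : ℕ) (hn : 1 ≤ n) (h : ℝ) (hh : 0 < h) :
    ‖∑ α : Fin 3, (Complex.I • (invSqrt hB * Amat α * invSqrt hB)) ⊗ₖ Dmat n h α‖ ≤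
      3 / h * (ρ ^ (-(1 / 2) : ℝ) * ‖invSqrt hS‖) := by
  classical
  have hs : 0 < Real.sqrt ρ := Real.sqrt_pos.mpr hρ
  set s : ℝ := Real.sqrt ρ with hsdef
  set R : Matrix (Fin 6) (Fin 6) ℂ := invSqrt hS with hR
  have hsqS : (ElasticAux.msqrt hS).PosSemidef := ElasticAux.msqrt_posSemidef hS
  have hdet : (ElasticAux.msqrt hS).det ≠ 0 := by
    have h1 : (ElasticAux.msqrt hS).det * (ElasticAux.msqrt hS).det = S.det := by
      rw [← Matrix.det_mul, ElasticAux.msqrt_mul_self hS]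
    have h2 : S.det ≠ 0 := hS.det_pos.ne'
    intro h0
    rw [h0, mul_zero] at h1
    exact h2 h1.symm
  have hRsq : R * ElasticAux.msqrt hS = 1 := by
    rw [hR, ElasticAux.invSqrt_eq]; exact Matrix.nonsing_inv_mul _ (isUnit_iff_ne_zero.mpr hdet)
  set V : Matrix StateIdx StateIdx ℂ :=
    Matrix.fromBlocks (((s : ℝ) : ℂ) • 1) 0 0 (Matrix.fromBlocks (ElasticAux.msqrt hS) 0 0 1)
    with hV
  set W : Matrix StateIdx StateIdx ℂ :=
    Matrix.fromBlocks (((s⁻¹ : ℝ) : ℂ) • 1) 0 0 (Matrix.fromBlocks R 0 0 1) with hW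
  have hVP : V.PosSemidef :=
    ElasticAux.posSemidef_fromBlocks (ElasticAux.smul_one_posSemidef hs.le)
      (ElasticAux.posSemidef_fromBlocks hsqS Matrix.PosSemidef.one)
  have hV2 : V ^ 2 = Bcell ρ S := by
    have e1 : (((s : ℝ) : ℂ) • (1 : Matrix (Fin 3) (Fin 3) ℂ)) * (((s : ℝ) : ℂ) • 1) =
        ((ρ : ℝ) : ℂ) • 1 := by
      rw [smul_mul_smul_comm, one_mul, ← Complex.ofReal_mul, hsdef, Real.mul_self_sqrt hρ.le]
    have e2 : ElasticAux.msqrt hS * ElasticAux.msqrt hS = S := ElasticAux.msqrt_mul_self hS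
    rw [pow_two, hV, Bcell, Matrix.fromBlocks_multiply, Matrix.fromBlocks_multiply]
    simp only [Matrix.mul_zero, Matrix.zero_mul, add_zero, zero_add, Matrix.mul_one,
      Matrix.one_mul, e1, e2]
  have hsqrtB : V = ElasticAux.msqrt hB := ElasticAux.eq_msqrt hB hVP hV2
  have hWV : W * V = 1 := by
    have e1 : (((s⁻¹ : ℝ) : ℂ) • (1 : Matrix (Fin 3) (Fin 3) ℂ)) * (((s : ℝ) : ℂ) • 1) = 1 := by
      rw [smul_mul_smul_comm, one_mul, ← Complex.ofReal_mul, inv_mul_cancel₀ hs.ne',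
        Complex.ofReal_one, one_smul]
    rw [hW, hV, Matrix.fromBlocks_multiply, Matrix.fromBlocks_multiply]
    simp only [Matrix.mul_zero, Matrix.zero_mul, add_zero, zero_add, Matrix.mul_one,
      Matrix.one_mul, e1, hRsq]
    simp [Matrix.fromBlocks_one]
  have hinvB : invSqrt hB = W := by
    show (ElasticAux.msqrt hB)⁻¹ = W
    rw [← hsqrtB]
    exact Matrix.inv_eq_left_inv hWV
  have hcnorm : ‖(((s⁻¹ : ℝ) : ℂ))‖ = s⁻¹ := by
    rw [Complex.norm_real, Real.norm_of_nonneg (by positivity)]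
  have hMα : ∀ α : Fin 3, ‖invSqrt hB * Amat α * invSqrt hB‖ ≤ s⁻¹ * ‖R‖ := by
    intro α
    have hEq : invSqrt hB * Amat α * invSqrt hB =
        Matrix.fromBlocks 0 (((s⁻¹ : ℝ) : ℂ) • Matrix.fromCols (Cmat α * R) 0)
          (((s⁻¹ : ℝ) : ℂ) • Matrix.fromRows (R * (Cmat α)ᵀ) 0) 0 := by
      rw [hinvB, hW, Amat]
      simp only [Matrix.fromBlocks_multiply, Matrix.mul_zero, Matrix.zero_mul, add_zero,
        zero_add, Matrix.smul_mul, Matrix.mul_smul, Matrix.one_mul, Matrix.mul_one,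
        Matrix.fromCols_mul_fromBlocks, Matrix.fromBlocks_mul_fromRows, smul_zero]
    rw [hEq]
    refine ElasticAux.fromBlocks_offdiag_norm_le ?_ ?_
    · rw [norm_smul, hcnorm]
      refine mul_le_mul_of_nonneg_left ?_ (by positivity)
      calc ‖Matrix.fromCols (Cmat α * R) 0‖ ≤ ‖Cmat α * R‖ :=
            ElasticAux.fromColumns_zero_norm_le _ _
        _ ≤ ‖Cmat α‖ * ‖R‖ := Matrix.l2_opNorm_mul _ _
        _ ≤ 1 * ‖R‖ := mul_le_mul_of_nonneg_right (ElasticAux.C_norm_le α) (norm_nonneg _)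
        _ = ‖R‖ := one_mul _
    · rw [norm_smul, hcnorm]
      refine mul_le_mul_of_nonneg_left ?_ (by positivity)
      have hCt : ‖(Cmat α)ᵀ‖ ≤ 1 := by
        rw [ElasticAux.C_transpose_eq, Matrix.l2_opNorm_conjTranspose]
        exact ElasticAux.C_norm_le α
      calc ‖Matrix.fromRows (R * (Cmat α)ᵀ) 0‖ ≤ ‖R * (Cmat α)ᵀ‖ :=
            ElasticAux.fromRows_zero_norm_le _ _
        _ ≤ ‖R‖ * ‖(Cmat α)ᵀ‖ := Matrix.l2_opNorm_mul _ _
        _ ≤ ‖R‖ * 1 := mul_le_mul_of_nonneg_left hCt (norm_nonneg _)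
        _ = ‖R‖ := mul_one _
  have hterm : ∀ α : Fin 3,
      ‖(Complex.I • (invSqrt hB * Amat α * invSqrt hB)) ⊗ₖ Dmat n h α‖ ≤
        (s⁻¹ * ‖R‖) * (1 / h) := by
    intro α
    calc ‖(Complex.I • (invSqrt hB * Amat α * invSqrt hB)) ⊗ₖ Dmat n h α‖
        ≤ ‖Complex.I • (invSqrt hB * Amat α * invSqrt hB)‖ * ‖Dmat n h α‖ :=
          ElasticAux.kron_norm_le _ _
      _ = ‖invSqrt hB * Amat α * invSqrt hB‖ * ‖Dmat n h α‖ := by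
          rw [norm_smul, Complex.norm_I, one_mul]
      _ ≤ (s⁻¹ * ‖R‖) * (1 / h) :=
          mul_le_mul (hMα α) (ElasticAux.Dmat_norm_le n hh α) (norm_nonneg _) (by positivity)
  calc ‖∑ α : Fin 3, (Complex.I • (invSqrt hB * Amat α * invSqrt hB)) ⊗ₖ Dmat n h α‖
      ≤ ∑ α : Fin 3, ‖(Complex.I • (invSqrt hB * Amat α * invSqrt hB)) ⊗ₖ Dmat n h α‖ :=
        norm_sum_le _ _
    _ ≤ ∑ _α : Fin 3, (s⁻¹ * ‖R‖) * (1 / h) := Finset.sum_le_sum fun α _ => hterm α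
    _ = 3 * ((s⁻¹ * ‖R‖) * (1 / h)) := by
        rw [Finset.sum_const, Finset.card_univ, Fintype.card_fin]
        ring
    _ = 3 / h * (ρ ^ (-(1 / 2) : ℝ) * ‖invSqrt hS‖) := by
        have hrpow : ρ ^ (-(1 / 2) : ℝ) = s⁻¹ := by
          rw [Real.rpow_neg hρ.le, ← Real.sqrt_eq_rpow]
        rw [hrpow, ← hR]
        ring
end

section
/- Let σ ≥ 0 and τ ≥ 0 be reals with τσ < 2, and let M be the 2×2 real matrix M = [[1 − τ²σ²/2, τσ(1 − τ²σ²/4)], [−τσ, 1 − τ²σ²/2]]. Then for every natural number m, ‖M^m‖ ≤ (1 − τ²σ²/4)^(−1/2). -/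
open Matrix
open scoped Matrix.Norms.L2Operator

/-- l2 operator norm bound for a 2×2 real diagonal matrix. -/
lemma l2_opNorm_diag_fin_two_le (a b c : ℝ) (hc : 0 ≤ c) (ha : |a| ≤ c) (hb : |b| ≤ c) :
    ‖(!![a, 0; 0, b] : Matrix (Fin 2) (Fin 2) ℝ)‖ ≤ c := by
  rw [Matrix.l2_opNorm_def]
  apply ContinuousLinearMap.opNorm_le_bound _ hc
  intro x
  simp only [LinearEquiv.trans_apply, LinearMap.coe_toContinuousLinearMap']
  have h0 : (Matrix.toEuclideanLin (!![a, 0; 0, b] : Matrix (Fin 2) (Fin 2) ℝ) x) 0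
      = a * x 0 := by
    simp [Matrix.toEuclideanLin_apply, Matrix.mulVec, dotProduct, Fin.sum_univ_two]
  have h1 : (Matrix.toEuclideanLin (!![a, 0; 0, b] : Matrix (Fin 2) (Fin 2) ℝ) x) 1
      = b * x 1 := by
    simp [Matrix.toEuclideanLin_apply, Matrix.mulVec, dotProduct, Fin.sum_univ_two]
  rw [EuclideanSpace.norm_eq, EuclideanSpace.norm_eq, Fin.sum_univ_two, Fin.sum_univ_two,
    h0, h1]
  simp only [Real.norm_eq_abs, sq_abs]
  rw [show c * Real.sqrt ((x 0) ^ 2 + (x 1) ^ 2)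
      = Real.sqrt (c ^ 2 * ((x 0) ^ 2 + (x 1) ^ 2)) by
    rw [Real.sqrt_mul (by positivity), Real.sqrt_sq hc]]
  apply Real.sqrt_le_sqrt
  have ha2 : a ^ 2 ≤ c ^ 2 := by nlinarith [abs_nonneg a, sq_abs a, sq_abs c]
  have hb2 : b ^ 2 ≤ c ^ 2 := by nlinarith [abs_nonneg b, sq_abs b, sq_abs c]
  nlinarith [sq_nonneg (x 0), sq_nonneg (x 1)]

/-- A matrix with `Qᴴ * Q = 1` has l2 operator norm 1. -/
lemma l2_opNorm_of_unitary {Q : Matrix (Fin 2) (Fin 2) ℝ} (hQ : Qᴴ * Q = 1) : ‖Q‖ = 1 := by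
  have h := Matrix.l2_opNorm_conjTranspose_mul_self Q
  rw [hQ] at h
  have h1 : ‖(1 : Matrix (Fin 2) (Fin 2) ℝ)‖ = 1 := CStarRing.norm_one
  rw [h1] at h
  nlinarith [norm_nonneg Q]

set_option maxHeartbeats 1000000 in
/-- Let `σ ≥ 0`, `τ ≥ 0` with `τσ < 2`, and let `M` be the one-step leapfrog propagator on a
singular pair with singular value `σ`:
`M = [[1 − τ²σ²/2, τσ(1 − τ²σ²/4)], [−τσ, 1 − τ²σ²/2]]`.
Then `‖M^m‖ ≤ (1 − τ²σ²/4)^(−1/2)` for every natural number `m`, in the spectral norm. -/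
theorem leapfrog_two_by_two_pow_bounded (σ τ : ℝ) (hσ : 0 ≤ σ) (hτ : 0 ≤ τ)
    (h2 : τ * σ < 2) (m : ℕ) :
    ‖(!![1 - τ ^ 2 * σ ^ 2 / 2, τ * σ * (1 - τ ^ 2 * σ ^ 2 / 4);
        -(τ * σ), 1 - τ ^ 2 * σ ^ 2 / 2] : Matrix (Fin 2) (Fin 2) ℝ) ^ m‖ ≤
      (1 - τ ^ 2 * σ ^ 2 / 4) ^ (-(1 / 2) : ℝ) := by
  have hx0 : 0 ≤ τ * σ := mul_nonneg hτ hσ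
  have hpos : 0 < 1 - τ ^ 2 * σ ^ 2 / 4 := by nlinarith
  set c : ℝ := Real.sqrt (1 - τ ^ 2 * σ ^ 2 / 4) with hcdef
  have hc0 : 0 < c := Real.sqrt_pos.mpr hpos
  have hc2 : c ^ 2 = 1 - τ ^ 2 * σ ^ 2 / 4 := Real.sq_sqrt hpos.le
  have hc1 : c ≤ 1 := by
    rw [show (1 : ℝ) = Real.sqrt 1 by simp]
    exact Real.sqrt_le_sqrt (by nlinarith)
  set M : Matrix (Fin 2) (Fin 2) ℝ :=
    !![1 - τ ^ 2 * σ ^ 2 / 2, τ * σ * (1 - τ ^ 2 * σ ^ 2 / 4);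
       -(τ * σ), 1 - τ ^ 2 * σ ^ 2 / 2] with hMdef
  set S : Matrix (Fin 2) (Fin 2) ℝ := !![1, 0; 0, c] with hSdef
  set Sinv : Matrix (Fin 2) (Fin 2) ℝ := !![1, 0; 0, c⁻¹] with hSinvdef
  set Q : Matrix (Fin 2) (Fin 2) ℝ :=
    !![1 - τ ^ 2 * σ ^ 2 / 2, τ * σ * c; -(τ * σ * c), 1 - τ ^ 2 * σ ^ 2 / 2] with hQdef
  have hSS : Sinv * S = 1 := by
    rw [hSinvdef, hSdef]
    ext i j
    fin_cases i <;> fin_cases j <;>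
      simp [Matrix.mul_apply, Fin.sum_univ_two, Matrix.one_apply] <;>
      field_simp
  have hSS' : S * Sinv = 1 := by
    rw [hSinvdef, hSdef]
    ext i j
    fin_cases i <;> fin_cases j <;>
      simp [Matrix.mul_apply, Fin.sum_univ_two, Matrix.one_apply] <;>
      field_simp
  have hM : M = Sinv * Q * S := by
    rw [hMdef, hSinvdef, hSdef, hQdef]
    ext i j
    fin_cases i <;> fin_cases j <;>
      simp [Matrix.mul_apply, Fin.sum_univ_two] <;>
      field_simp <;>
      nlinarith [hc2, hc0]
  have hQu : Qᴴ * Q = 1 := by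
    have hQH : Qᴴ = !![1 - τ ^ 2 * σ ^ 2 / 2, -(τ * σ * c);
        τ * σ * c, 1 - τ ^ 2 * σ ^ 2 / 2] := by
      rw [hQdef]
      ext i j
      fin_cases i <;> fin_cases j <;> simp [Matrix.conjTranspose_apply]
    rw [hQH, hQdef]
    ext i j
    fin_cases i <;> fin_cases j <;>
      simp [Matrix.mul_apply, Fin.sum_univ_two, Matrix.one_apply] <;>
      nlinarith [hc2]
  have hQmu : ∀ k : ℕ, (Q ^ k)ᴴ * Q ^ k = 1 := by
    intro k
    induction k with
    | zero => simp
    | succ n ih =>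
      rw [pow_succ, Matrix.conjTranspose_mul, mul_assoc, ← mul_assoc ((Q ^ n)ᴴ), ih,
        one_mul, hQu]
  have hpow : M ^ m = Sinv * Q ^ m * S := by
    induction m with
    | zero => simp only [pow_zero, mul_one]; exact hSS.symm
    | succ n ih =>
      rw [pow_succ, ih, hM, pow_succ]
      have hstep : S * (Sinv * Q * S) = Q * S := by
        rw [← mul_assoc, ← mul_assoc, hSS', one_mul]
      rw [mul_assoc (Sinv * Q ^ n), hstep, ← mul_assoc, ← mul_assoc, mul_assoc Sinv]
  have hnormS : ‖S‖ ≤ 1 := by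
    apply l2_opNorm_diag_fin_two_le 1 c 1 zero_le_one (by simp)
    rw [abs_of_pos hc0]; exact hc1
  have hnormSinv : ‖Sinv‖ ≤ c⁻¹ := by
    apply l2_opNorm_diag_fin_two_le 1 c⁻¹ c⁻¹ (by positivity)
    · rw [abs_one, le_inv_comm₀ one_pos hc0, inv_one]
      exact hc1
    · rw [abs_of_pos (by positivity)]
  have hnormQ : ‖Q ^ m‖ = 1 := l2_opNorm_of_unitary (hQmu m)
  have hbound : ‖M ^ m‖ ≤ c⁻¹ := by
    rw [hpow]
    calc ‖Sinv * Q ^ m * S‖ ≤ ‖Sinv * Q ^ m‖ * ‖S‖ := Matrix.l2_opNorm_mul _ _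
    _ ≤ ‖Sinv‖ * ‖Q ^ m‖ * ‖S‖ := by
        apply mul_le_mul_of_nonneg_right (Matrix.l2_opNorm_mul _ _) (norm_nonneg _)
    _ ≤ c⁻¹ * 1 := by
        apply mul_le_mul _ hnormS (norm_nonneg _) (by positivity)
        simpa [hnormQ] using hnormSinv
    _ = c⁻¹ := by ring
  have hrhs : (1 - τ ^ 2 * σ ^ 2 / 4) ^ (-(1 / 2) : ℝ) = c⁻¹ := by
    rw [Real.rpow_neg hpos.le, hcdef, Real.sqrt_eq_rpow]
  rw [hrhs]
  exact hbound
end
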